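/- arXiv:1904.09332 — 5 statements merged into one kernel-verified Lean document; each statement's English description precedes it below -/
import Mathlib

section
/- For every real number λ > 0 and every s ∈ (0,1), λ^{-s} = β₀(1-s) · ∫₀^∞ (λ + e^{-y/(1-s)})^{-1} e^{-y} dy + β₀(s) · ∫₀^∞ (e^{-y/s} λ + 1)^{-1} e^{-y} dy, where both integrals converge. -/
open MeasureTheory Real Set


lemma beta_val {s : ℝ} (hs : s ∈ Set.Ioo (0:ℝ) 1) :
    ∫ x in Set.Ioo (0:ℝ) 1, x ^ (-s) * (1 - x) ^ (s - 1) = π / Real.sin (π * s) := by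
  obtain ⟨hs0, hs1⟩ := hs
  have h1 : (0:ℝ) < 1 - s := by linarith
  have key : Complex.betaIntegral (1 - s) s =
      ((∫ x in Set.Ioo (0:ℝ) 1, x ^ (-s) * (1 - x) ^ (s - 1) : ℝ) : ℂ) := by
    rw [Complex.betaIntegral, intervalIntegral.integral_of_le zero_le_one,
      MeasureTheory.integral_Ioc_eq_integral_Ioo]
    rw [show ((∫ x in Set.Ioo (0:ℝ) 1, x ^ (-s) * (1 - x) ^ (s - 1) : ℝ) : ℂ)
        = ∫ x in Set.Ioo (0:ℝ) 1, ((x ^ (-s) * (1 - x) ^ (s - 1) : ℝ) : ℂ) from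
      (integral_ofReal (𝕜 := ℂ)).symm]
    refine setIntegral_congr_fun measurableSet_Ioo (fun x hx => ?_)
    have hx0 : (0:ℝ) < x := hx.1
    have hx1 : (0:ℝ) ≤ 1 - x := by linarith [hx.2]
    push_cast
    rw [Complex.ofReal_cpow hx0.le, Complex.ofReal_cpow hx1]
    push_cast
    ring_nf
  have h2 : Complex.Gamma (1 - s) * Complex.Gamma s =
      Complex.Gamma 1 * Complex.betaIntegral (1 - s) s := by
    have := Complex.Gamma_mul_Gamma_eq_betaIntegral (s := ((1 - s : ℝ) : ℂ)) (t := (s : ℂ))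
      (by simpa using h1) (by simpa using hs0)
    push_cast at this ⊢
    simpa using this
  rw [Complex.Gamma_one, one_mul] at h2
  have h3 : Complex.Gamma (s : ℂ) * Complex.Gamma (1 - (s:ℂ)) = π / Complex.sin (π * s) :=
    Complex.Gamma_mul_Gamma_one_sub s
  have hsin : Real.sin (π * s) ≠ 0 := by
    have : 0 < Real.sin (π * s) := Real.sin_pos_of_pos_of_lt_pi (by positivity)
      (by nlinarith [Real.pi_pos])
    exact this.ne'
  have h4 : ((∫ x in Set.Ioo (0:ℝ) 1, x ^ (-s) * (1 - x) ^ (s - 1) : ℝ) : ℂ)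
      = ((π / Real.sin (π * s) : ℝ) : ℂ) := by
    rw [← key, ← h2]
    rw [mul_comm] at h3
    push_cast at h3 ⊢
    rw [h3]
  exact_mod_cast h4

lemma kato_one {s : ℝ} (hs : s ∈ Set.Ioo (0:ℝ) 1) :
    ∫ t in Set.Ioi (0:ℝ), t ^ (-s) * (1 + t)⁻¹ = π / Real.sin (π * s) := by
  obtain ⟨hs0, hs1⟩ := hs
  have himg : (fun x : ℝ => x / (1 - x)) '' Set.Ioo 0 1 = Set.Ioi 0 := by
    ext t
    constructor
    · rintro ⟨x, hx, rfl⟩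
      exact div_pos hx.1 (by linarith [hx.2])
    · intro ht
      refine ⟨t / (1 + t), ⟨div_pos ht (by linarith [mem_Ioi.mp ht]), ?_⟩, ?_⟩
      · rw [div_lt_one (by linarith [mem_Ioi.mp ht])]; linarith [mem_Ioi.mp ht]
      · have h1t : (0:ℝ) < 1 + t := by linarith [mem_Ioi.mp ht]
        field_simp
        ring
  have hderiv : ∀ x ∈ Set.Ioo (0:ℝ) 1, HasDerivWithinAt (fun x : ℝ => x / (1 - x))
      (((1 - x) ^ 2)⁻¹) (Set.Ioo 0 1) x := by
    intro x hx
    have hne : (1 : ℝ) - x ≠ 0 := by linarith [hx.2]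
    have := (hasDerivAt_id x).div ((hasDerivAt_const x 1).sub (hasDerivAt_id x)) hne
    convert this.hasDerivWithinAt using 1
    · rfl
    · rfl
    · rfl
    · simp only [Pi.sub_apply, id]
      field_simp
      ring
  have hinj : Set.InjOn (fun x : ℝ => x / (1 - x)) (Set.Ioo 0 1) := by
    intro a ha b hb h
    have h1 : (1:ℝ) - a ≠ 0 := by linarith [ha.2]
    have h2 : (1:ℝ) - b ≠ 0 := by linarith [hb.2]
    field_simp at h
    linarith
  rw [← himg, integral_image_eq_integral_abs_deriv_smul measurableSet_Ioo hderiv hinj,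
    ← beta_val ⟨hs0, hs1⟩]
  refine setIntegral_congr_fun measurableSet_Ioo (fun x hx => ?_)
  have hx0 : (0:ℝ) < x := hx.1
  have hx1 : (0:ℝ) < 1 - x := by linarith [hx.2]
  have e0 : (1 + x / (1 - x)) = (1 - x)⁻¹ := by field_simp; ring
  have e1 : (x / (1 - x)) ^ (-s) = x ^ (-s) * (1 - x) ^ s := by
    rw [Real.div_rpow hx0.le hx1.le, Real.rpow_neg hx1.le, div_inv_eq_mul]
  have e2 : (1 - x) ^ (s - 1) = (1 - x) ^ s * (1 - x)⁻¹ := by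
    rw [Real.rpow_sub hx1, Real.rpow_one, div_eq_mul_inv]
  rw [smul_eq_mul, e0, e1, e2, abs_of_pos (by positivity)]
  field_simp

lemma kato {s lam : ℝ} (hs : s ∈ Set.Ioo (0:ℝ) 1) (hlam : 0 < lam) :
    ∫ t in Set.Ioi (0:ℝ), t ^ (-s) * (lam + t)⁻¹
      = π / Real.sin (π * s) * lam ^ (-s) := by
  have himg : (fun u : ℝ => lam * u) '' Set.Ioi 0 = Set.Ioi 0 :=
    Set.image_const_mul_Ioi_zero hlam
  have hderiv : ∀ u ∈ Set.Ioi (0:ℝ), HasDerivWithinAt (fun u : ℝ => lam * u) lam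
      (Set.Ioi 0) u := fun u _ => by
    simpa using ((hasDerivAt_id u).const_mul lam).hasDerivWithinAt
  have hinj : Set.InjOn (fun u : ℝ => lam * u) (Set.Ioi 0) :=
    fun a _ b _ h => mul_left_cancel₀ hlam.ne' h
  rw [← himg, integral_image_eq_integral_abs_deriv_smul measurableSet_Ioi hderiv hinj]
  have : ∀ u ∈ Set.Ioi (0:ℝ), |lam| • ((lam * u) ^ (-s) * (lam + lam * u)⁻¹)
      = lam ^ (-s) * (u ^ (-s) * (1 + u)⁻¹) := by
    intro u hu
    have hu0 : (0:ℝ) < u := hu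
    rw [smul_eq_mul, Real.mul_rpow hlam.le hu0.le, abs_of_pos hlam,
      show lam + lam * u = lam * (1 + u) by ring, mul_inv]
    have h1u : (0:ℝ) < 1 + u := by linarith
    field_simp
  rw [setIntegral_congr_fun measurableSet_Ioi this, integral_const_mul, kato_one hs]
  ring

/-- Scalar (per-eigenvalue) form of the partitioned Dunford–Taylor representation
(Lemma 3.1 of the paper): with `β₀(t) = sin(πt)/(πt)` and weight `W(y) = e^{-y}`,
for `0 < λ` and `s ∈ (0,1)`,
`λ^{-s} = β₀(1-s) ∫₀^∞ (λ + e^{-y/(1-s)})⁻¹ e^{-y} dy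
        + β₀(s) ∫₀^∞ (e^{-y/s} λ + 1)⁻¹ e^{-y} dy`,
and both integrals converge. -/
theorem partitioned_kato_scalar (lam : ℝ) (hlam : 0 < lam) (s : ℝ)
    (hs : s ∈ Set.Ioo (0:ℝ) 1) :
    MeasureTheory.IntegrableOn
      (fun y : ℝ => (lam + Real.exp (-y / (1 - s)))⁻¹ * Real.exp (-y)) (Set.Ioi 0) ∧
    MeasureTheory.IntegrableOn
      (fun y : ℝ => (Real.exp (-y / s) * lam + 1)⁻¹ * Real.exp (-y)) (Set.Ioi 0) ∧
    lam ^ (-s) =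
      (Real.sin (Real.pi * (1 - s)) / (Real.pi * (1 - s))) *
        (∫ y in Set.Ioi (0:ℝ), (lam + Real.exp (-y / (1 - s)))⁻¹ * Real.exp (-y)) +
      (Real.sin (Real.pi * s) / (Real.pi * s)) *
        (∫ y in Set.Ioi (0:ℝ), (Real.exp (-y / s) * lam + 1)⁻¹ * Real.exp (-y)) := by
  obtain ⟨hs0, hs1⟩ := hs
  have hσ : (0:ℝ) < 1 - s := by linarith
  set f1 : ℝ → ℝ := fun y => (lam + Real.exp (-y / (1 - s)))⁻¹ * Real.exp (-y) with hf1
  set f2 : ℝ → ℝ := fun y => (Real.exp (-y / s) * lam + 1)⁻¹ * Real.exp (-y) with hf2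
  set g : ℝ → ℝ := fun t => t ^ (-s) * (lam + t)⁻¹ with hg
  have hexp : IntegrableOn (fun y : ℝ => Real.exp (-y)) (Set.Ioi 0) := by
    simpa using exp_neg_integrableOn_Ioi 0 one_pos
  -- integrability of f1
  have hI1 : IntegrableOn f1 (Set.Ioi 0) := by
    refine Integrable.mono' (hexp.const_mul lam⁻¹) ?_ ?_
    · have c1 : Continuous fun y : ℝ => lam + Real.exp (-y / (1 - s)) :=
        continuous_const.add (Real.continuous_exp.comp ((continuous_id.neg).div_const _))
      exact ((c1.inv₀ fun y => by positivity).mul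
        (Real.continuous_exp.comp continuous_neg)).aestronglyMeasurable
    · filter_upwards with y
      have h1 : (0:ℝ) < lam + Real.exp (-y / (1 - s)) := by positivity
      rw [Real.norm_eq_abs, abs_of_nonneg (by positivity)]
      have : (lam + Real.exp (-y / (1 - s)))⁻¹ ≤ lam⁻¹ :=
        inv_anti₀ hlam (by nlinarith [Real.exp_pos (-y / (1 - s))])
      simp only [hf1]
      exact mul_le_mul_of_nonneg_right this (Real.exp_pos _).le
  have hI2 : IntegrableOn f2 (Set.Ioi 0) := by
    refine Integrable.mono' hexp ?_ ?_
    · have c1 : Continuous fun y : ℝ => Real.exp (-y / s) * lam + 1 :=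
        ((Real.continuous_exp.comp ((continuous_id.neg).div_const _)).mul
          continuous_const).add continuous_const
      exact ((c1.inv₀ fun y => by positivity).mul
        (Real.continuous_exp.comp continuous_neg)).aestronglyMeasurable
    · filter_upwards with y
      have h1 : (0:ℝ) < Real.exp (-y / s) * lam + 1 := by positivity
      rw [Real.norm_eq_abs, abs_of_nonneg (by positivity)]
      have h2 : (Real.exp (-y / s) * lam + 1)⁻¹ ≤ 1 := by
        rw [inv_le_one_iff₀]; right; nlinarith [Real.exp_pos (-y/s), hlam]
      simp only [hf2]
      nlinarith [Real.exp_pos (-y), h2, (Real.exp_pos (-y/s)).le]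
  -- substitution 1 : y ↦ exp (-y/(1-s)), Ioi 0 → Ioo 0 1
  have himg1 : (fun y : ℝ => Real.exp (-y / (1 - s))) '' Set.Ioi 0 = Set.Ioo 0 1 := by
    ext t
    constructor
    · rintro ⟨y, hy, rfl⟩
      exact ⟨Real.exp_pos _, Real.exp_lt_one_iff.mpr (by
        apply div_neg_of_neg_of_pos <;> [linarith [mem_Ioi.mp hy]; exact hσ])⟩
    · rintro ⟨ht0, ht1⟩
      refine ⟨-((1 - s) * Real.log t), ?_, ?_⟩
      · have := Real.log_neg ht0 ht1
        simp only [mem_Ioi]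
        nlinarith
      · show Real.exp (-(-((1 - s) * Real.log t)) / (1 - s)) = t
        rw [show -(-((1 - s) * Real.log t)) / (1 - s) = Real.log t by field_simp,
          Real.exp_log ht0]
  have hderiv1 : ∀ y ∈ Set.Ioi (0:ℝ), HasDerivWithinAt
      (fun y : ℝ => Real.exp (-y / (1 - s)))
      (Real.exp (-y / (1 - s)) * (-(1 - s)⁻¹)) (Set.Ioi 0) y := by
    intro y _
    have inner : HasDerivAt (fun y : ℝ => -y / (1 - s)) (-(1 - s)⁻¹) y := by
      simpa [neg_div] using ((hasDerivAt_id y).neg.div_const (1 - s))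
    exact (inner.exp).hasDerivWithinAt
  have hinj1 : Set.InjOn (fun y : ℝ => Real.exp (-y / (1 - s))) (Set.Ioi 0) := by
    intro a _ b _ h
    have h2 : -a / (1 - s) = -b / (1 - s) := Real.exp_injective h
    field_simp at h2
    linarith
  have ptw1 : ∀ y : ℝ, |Real.exp (-y / (1 - s)) * (-(1 - s)⁻¹)| •
      g (Real.exp (-y / (1 - s))) = (1 - s)⁻¹ * f1 y := by
    intro y
    have e2 : Real.exp (-y / (1 - s)) * Real.exp (-y / (1 - s) * (-s)) = Real.exp (-y) := by
      rw [← Real.exp_add]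
      congr 1
      field_simp
      ring
    simp only [hg, hf1, smul_eq_mul]
    rw [abs_mul, abs_of_pos (Real.exp_pos _), abs_neg,
      abs_of_pos (inv_pos.mpr hσ), ← Real.exp_mul]
    calc Real.exp (-y / (1 - s)) * (1 - s)⁻¹ *
          (Real.exp (-y / (1 - s) * (-s)) * (lam + Real.exp (-y / (1 - s)))⁻¹)
        = (1 - s)⁻¹ * ((lam + Real.exp (-y / (1 - s)))⁻¹ *
            (Real.exp (-y / (1 - s)) * Real.exp (-y / (1 - s) * (-s)))) := by ring
      _ = _ := by rw [e2]
  have sub1 : ∫ t in Set.Ioo (0:ℝ) 1, g t = (1 - s)⁻¹ * ∫ y in Set.Ioi (0:ℝ), f1 y := by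
    rw [← himg1, integral_image_eq_integral_abs_deriv_smul measurableSet_Ioi hderiv1 hinj1]
    simp_rw [ptw1]
    rw [integral_const_mul]
  have int1 : IntegrableOn g (Set.Ioo 0 1) := by
    rw [← himg1, integrableOn_image_iff_integrableOn_abs_deriv_smul
      measurableSet_Ioi hderiv1 hinj1]
    exact (hI1.const_mul ((1 - s)⁻¹)).congr
      (Filter.Eventually.of_forall fun y => (ptw1 y).symm)
  -- substitution 2 : y ↦ exp (y/s), Ioi 0 → Ioi 1
  have himg2 : (fun y : ℝ => Real.exp (y / s)) '' Set.Ioi 0 = Set.Ioi 1 := by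
    ext t
    constructor
    · rintro ⟨y, hy, rfl⟩
      have h : Real.exp 0 < Real.exp (y / s) :=
        Real.exp_lt_exp.mpr (div_pos (mem_Ioi.mp hy) hs0)
      simpa using h
    · intro ht
      have ht1 : (1:ℝ) < t := ht
      refine ⟨s * Real.log t, ?_, ?_⟩
      · have := Real.log_pos ht1
        simp only [mem_Ioi]
        nlinarith
      · show Real.exp (s * Real.log t / s) = t
        rw [show s * Real.log t / s = Real.log t by field_simp, Real.exp_log (by linarith)]
  have hderiv2 : ∀ y ∈ Set.Ioi (0:ℝ), HasDerivWithinAt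
      (fun y : ℝ => Real.exp (y / s)) (Real.exp (y / s) * s⁻¹) (Set.Ioi 0) y := by
    intro y _
    have inner : HasDerivAt (fun y : ℝ => y / s) (s⁻¹) y := by
      simpa using ((hasDerivAt_id y).div_const s)
    exact (inner.exp).hasDerivWithinAt
  have hinj2 : Set.InjOn (fun y : ℝ => Real.exp (y / s)) (Set.Ioi 0) := by
    intro a _ b _ h
    have h2 : a / s = b / s := Real.exp_injective h
    field_simp at h2
    exact h2
  have ptw2 : ∀ y : ℝ, |Real.exp (y / s) * s⁻¹| • g (Real.exp (y / s))
      = s⁻¹ * f2 y := by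
    intro y
    have e1 : (Real.exp (y / s)) ^ (-s) = Real.exp (-y) := by
      rw [← Real.exp_mul]
      congr 1
      field_simp
    have e2 : (lam + Real.exp (y / s))⁻¹
        = Real.exp (-y / s) * (Real.exp (-y / s) * lam + 1)⁻¹ := by
      have hmul : Real.exp (-y / s) * (lam + Real.exp (y / s))
          = Real.exp (-y / s) * lam + 1 := by
        rw [mul_add, ← Real.exp_add]
        simp [neg_div]
      conv_rhs => rw [← hmul, mul_inv, ← mul_assoc,
        mul_inv_cancel₀ (Real.exp_pos (-y / s)).ne', one_mul]
    simp only [hg, hf2, smul_eq_mul]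
    rw [abs_mul, abs_of_pos (Real.exp_pos _),
      abs_of_pos (inv_pos.mpr hs0), e1, e2]
    have e3 : Real.exp (y / s) * Real.exp (-y / s) = 1 := by
      rw [← Real.exp_add]; simp [neg_div]
    calc Real.exp (y / s) * s⁻¹ *
          (Real.exp (-y) * (Real.exp (-y / s) * (Real.exp (-y / s) * lam + 1)⁻¹))
        = s⁻¹ * ((Real.exp (-y / s) * lam + 1)⁻¹ * Real.exp (-y)) *
            (Real.exp (y / s) * Real.exp (-y / s)) := by ring
      _ = _ := by rw [e3, mul_one]
  have sub2 : ∫ t in Set.Ioi (1:ℝ), g t = s⁻¹ * ∫ y in Set.Ioi (0:ℝ), f2 y := by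
    rw [← himg2, integral_image_eq_integral_abs_deriv_smul measurableSet_Ioi hderiv2 hinj2]
    simp_rw [ptw2]
    rw [integral_const_mul]
  have int2 : IntegrableOn g (Set.Ioi 1) := by
    rw [← himg2, integrableOn_image_iff_integrableOn_abs_deriv_smul
      measurableSet_Ioi hderiv2 hinj2]
    exact (hI2.const_mul (s⁻¹)).congr
      (Filter.Eventually.of_forall fun y => (ptw2 y).symm)
  -- split the Kato integral
  have hsplit : ∫ t in Set.Ioi (0:ℝ), g t
      = (∫ t in Set.Ioo (0:ℝ) 1, g t) + ∫ t in Set.Ioi (1:ℝ), g t := by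
    rw [← Set.Ioc_union_Ioi_eq_Ioi (zero_le_one : (0:ℝ) ≤ 1),
      setIntegral_union (Set.Ioc_disjoint_Ioi le_rfl) measurableSet_Ioi
        ((integrableOn_Ioc_iff_integrableOn_Ioo).mpr int1) int2,
      MeasureTheory.integral_Ioc_eq_integral_Ioo]
  have hkato := kato ⟨hs0, hs1⟩ hlam
  have hsin : (0:ℝ) < Real.sin (π * s) :=
    Real.sin_pos_of_pos_of_lt_pi (by positivity) (by nlinarith [Real.pi_pos])
  have hsin' : Real.sin (π * (1 - s)) = Real.sin (π * s) := by
    rw [show π * (1 - s) = π - π * s by ring, Real.sin_pi_sub]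
  refine ⟨hI1, hI2, ?_⟩
  rw [hsin']
  have hpi := Real.pi_pos
  have hmain : π / Real.sin (π * s) * lam ^ (-s)
      = (1 - s)⁻¹ * (∫ y in Set.Ioi (0:ℝ), f1 y) + s⁻¹ * ∫ y in Set.Ioi (0:ℝ), f2 y := by
    rw [← sub1, ← sub2, ← hsplit, hkato]
  have h0 : Real.sin (π * s) ≠ 0 := hsin.ne'
  field_simp at hmain ⊢
  nlinarith [hmain, sq_nonneg (Real.sin (π * s))]
end

section
/- Let S and M be symmetric positive definite real N×N matrices, let f ∈ ℝ^N, and let μ, ν ≥ 0 with μ + ν > 0. Then μS + νM is invertible, and the solution w of (μS + νM) w = f satisfies ‖w‖_M ≤ ‖f‖_{M^{-1}} / (μ λ_min(S, M) + ν), where λ_min(S, M) := inf over nonzero x ∈ ℝ^N of (xᵀ S x)/(xᵀ M x). -/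
open Matrix

/-- The smallest generalized eigenvalue of the pair `(S, M)`:
`λ_min(S, M) = inf_{x ≠ 0} (xᵀ S x)/(xᵀ M x)`. -/
noncomputable def lamMinGen {N : ℕ} (S M : Matrix (Fin N) (Fin N) ℝ) : ℝ :=
  sInf ((fun x : Fin N → ℝ => (x ⬝ᵥ S.mulVec x) / (x ⬝ᵥ M.mulVec x)) '' {x | x ≠ 0})

/-- The `M`-norm `‖x‖_M = √(xᵀ M x)`. -/
noncomputable def normWeighted {N : ℕ} (M : Matrix (Fin N) (Fin N) ℝ) (x : Fin N → ℝ) : ℝ :=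
  Real.sqrt (x ⬝ᵥ M.mulVec x)

section Aux

variable {N : ℕ}

lemma quad_pos {M : Matrix (Fin N) (Fin N) ℝ} (hM : M.PosDef) {x : Fin N → ℝ} (hx : x ≠ 0) :
    0 < x ⬝ᵥ M.mulVec x := by
  have := hM.dotProduct_mulVec_pos hx
  simpa using this

lemma dot_symm {M : Matrix (Fin N) (Fin N) ℝ} (hM : M.IsHermitian) (x y : Fin N → ℝ) :
    x ⬝ᵥ M.mulVec y = y ⬝ᵥ M.mulVec x := by
  have hT : Mᵀ = M := by simpa using hM.eq
  rw [dotProduct_mulVec, dotProduct_comm, ← mulVec_transpose, hT]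

lemma cs {M : Matrix (Fin N) (Fin N) ℝ} (hM : M.PosDef) (x y : Fin N → ℝ) :
    (x ⬝ᵥ M.mulVec y) ^ 2 ≤ (x ⬝ᵥ M.mulVec x) * (y ⬝ᵥ M.mulVec y) := by
  by_cases hy : y = 0
  · simp [hy]
  set b := x ⬝ᵥ M.mulVec y with hb
  set c := y ⬝ᵥ M.mulVec y with hc
  have hcpos : 0 < c := quad_pos hM hy
  have hz : 0 ≤ (c • x - b • y) ⬝ᵥ M.mulVec (c • x - b • y) := by
    simpa using hM.posSemidef.dotProduct_mulVec_nonneg (c • x - b • y)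
  have hyx : y ⬝ᵥ M.mulVec x = b := (dot_symm hM.1 y x).trans hb.symm
  have hexp : (c • x - b • y) ⬝ᵥ M.mulVec (c • x - b • y)
      = c^2 * (x ⬝ᵥ M.mulVec x) - 2 * c * b^2 + b^2 * c := by
    simp only [mulVec_sub, mulVec_smul, sub_dotProduct, dotProduct_sub, smul_dotProduct,
      dotProduct_smul, smul_eq_mul, hyx, ← hb, ← hc]
    ring
  rw [hexp] at hz
  nlinarith

lemma quad_smul (M : Matrix (Fin N) (Fin N) ℝ) (t : ℝ) (x : Fin N → ℝ) :
    (t • x) ⬝ᵥ M.mulVec (t • x) = t ^ 2 * (x ⬝ᵥ M.mulVec x) := by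
  simp only [mulVec_smul, smul_dotProduct, dotProduct_smul, smul_eq_mul]
  ring

lemma ratio_bddBelow {S M : Matrix (Fin N) (Fin N) ℝ} (hS : S.PosDef) (hM : M.PosDef) :
    ∀ r ∈ ((fun x : Fin N → ℝ => (x ⬝ᵥ S.mulVec x) / (x ⬝ᵥ M.mulVec x)) '' {x | x ≠ 0}), 0 ≤ r := by
  rintro r ⟨x, hx, rfl⟩
  exact le_of_lt (div_pos (quad_pos hS hx) (quad_pos hM hx))

lemma lamMinGen_nonneg {S M : Matrix (Fin N) (Fin N) ℝ} (hS : S.PosDef) (hM : M.PosDef) :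
    0 ≤ lamMinGen S M :=
  Real.sInf_nonneg (ratio_bddBelow hS hM)

lemma lamMinGen_le {S M : Matrix (Fin N) (Fin N) ℝ} (hS : S.PosDef) (hM : M.PosDef)
    {x : Fin N → ℝ} (hx : x ≠ 0) :
    lamMinGen S M ≤ (x ⬝ᵥ S.mulVec x) / (x ⬝ᵥ M.mulVec x) :=
  csInf_le ⟨0, fun r hr => ratio_bddBelow hS hM r hr⟩ ⟨x, hx, rfl⟩

lemma lamMinGen_pos (hN : 0 < N) {S M : Matrix (Fin N) (Fin N) ℝ}
    (hS : S.PosDef) (hM : M.PosDef) : 0 < lamMinGen S M := by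
  have : Nonempty (Fin N) := ⟨⟨0, hN⟩⟩
  set g : (Fin N → ℝ) → ℝ := fun x => (x ⬝ᵥ S.mulVec x) / (x ⬝ᵥ M.mulVec x) with hg
  have hscale : ∀ (x : Fin N → ℝ), x ≠ 0 → g ((‖x‖⁻¹ : ℝ) • x) = g x := by
    intro x hx
    have ht : (‖x‖⁻¹ : ℝ) ^ 2 ≠ 0 := pow_ne_zero 2 (inv_ne_zero (norm_ne_zero_iff.mpr hx))
    simp only [hg, quad_smul, mul_div_mul_left _ _ ht]
  have hcont : ContinuousOn g (Metric.sphere (0 : Fin N → ℝ) 1) := by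
    have h1 : Continuous fun x : Fin N → ℝ => x ⬝ᵥ S.mulVec x :=
      continuous_id.dotProduct (continuous_const.matrix_mulVec continuous_id)
    have h2 : Continuous fun x : Fin N → ℝ => x ⬝ᵥ M.mulVec x :=
      continuous_id.dotProduct (continuous_const.matrix_mulVec continuous_id)
    apply h1.continuousOn.div h2.continuousOn
    intro x hx
    have hx0 : x ≠ 0 := by
      intro h
      rw [h] at hx
      simp at hx
    exact ne_of_gt (quad_pos hM hx0)
  have hsne : (Metric.sphere (0 : Fin N → ℝ) 1).Nonempty := by
    have : Nontrivial (Fin N → ℝ) := inferInstance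
    exact NormedSpace.sphere_nonempty.mpr zero_le_one
  obtain ⟨x₀, hx₀s, hmin⟩ := (isCompact_sphere (0 : Fin N → ℝ) 1).exists_isMinOn hsne hcont
  have hx₀ : x₀ ≠ 0 := by
    intro h; rw [h] at hx₀s; simp at hx₀s
  have hc : 0 < g x₀ := div_pos (quad_pos hS hx₀) (quad_pos hM hx₀)
  refine lt_of_lt_of_le hc (le_csInf ?_ ?_)
  · exact ⟨g x₀, ⟨x₀, hx₀, rfl⟩⟩
  · rintro r ⟨x, hx, rfl⟩
    have hmem : (‖x‖⁻¹ : ℝ) • x ∈ Metric.sphere (0 : Fin N → ℝ) 1 := by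
      simp only [Metric.mem_sphere, dist_zero_right, norm_smul, norm_inv, norm_norm]
      exact inv_mul_cancel₀ (norm_ne_zero_iff.mpr hx)
    calc g x₀ ≤ g ((‖x‖⁻¹ : ℝ) • x) := hmin hmem
    _ = g x := hscale x hx

lemma combo_posDef {S M : Matrix (Fin N) (Fin N) ℝ} (hS : S.PosDef) (hM : M.PosDef)
    {μ ν : ℝ} (hμ : 0 ≤ μ) (hν : 0 ≤ ν) (hμν : 0 < μ + ν) : (μ • S + ν • M).PosDef := by
  refine posDef_iff_dotProduct_mulVec.mpr ⟨?_, ?_⟩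
  · have hSh : Sᴴ = S := hS.1
    have hMh : Mᴴ = M := hM.1
    show (μ • S + ν • M)ᴴ = μ • S + ν • M
    rw [conjTranspose_add, conjTranspose_smul, conjTranspose_smul, hSh, hMh]
    simp
  · intro x hx
    have h1 : 0 < x ⬝ᵥ S.mulVec x := quad_pos hS hx
    have h2 : 0 < x ⬝ᵥ M.mulVec x := quad_pos hM hx
    have hexp : star x ⬝ᵥ (μ • S + ν • M).mulVec x
        = μ * (x ⬝ᵥ S.mulVec x) + ν * (x ⬝ᵥ M.mulVec x) := by
      simp [add_mulVec, smul_mulVec, dotProduct_add, dotProduct_smul, smul_eq_mul]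
    rw [hexp]
    rcases lt_or_ge 0 μ with hμ' | hμ'
    · exact add_pos_of_pos_of_nonneg (mul_pos hμ' h1) (mul_nonneg hν h2.le)
    · have hμ0 : μ = 0 := le_antisymm hμ' hμ
      have hν' : 0 < ν := by linarith
      rw [hμ0]
      simpa using mul_pos hν' h2

end Aux

/-- General resolvent stability estimate: for symmetric positive definite `S, M`,
`f ∈ ℝ^N`, and `μ, ν ≥ 0` with `μ + ν > 0`, the matrix `μS + νM` is invertible and
the solution `w` of `(μS + νM) w = f` satisfies
`‖w‖_M ≤ ‖f‖_{M⁻¹} / (μ λ_min(S,M) + ν)`. -/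
theorem resolvent_stability {N : ℕ} (S M : Matrix (Fin N) (Fin N) ℝ)
    (hS : S.PosDef) (hM : M.PosDef) (f : Fin N → ℝ)
    (μ ν : ℝ) (hμ : 0 ≤ μ) (hν : 0 ≤ ν) (hμν : 0 < μ + ν) :
    IsUnit (μ • S + ν • M) ∧
    ∀ w : Fin N → ℝ, (μ • S + ν • M).mulVec w = f →
      normWeighted M w ≤ normWeighted M⁻¹ f / (μ * lamMinGen S M + ν) := by
  have hA : (μ • S + ν • M).PosDef := combo_posDef hS hM hμ hν hμν
  refine ⟨hA.isUnit, ?_⟩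
  intro w hw
  rcases Nat.eq_zero_or_pos N with h0 | hN
  · -- trivial case N = 0
    subst h0
    have hwz : w ⬝ᵥ M.mulVec w = 0 := by
      simp [dotProduct]
    have hden : 0 ≤ μ * lamMinGen S M + ν := by
      have := lamMinGen_nonneg hS hM
      positivity
    rw [normWeighted, normWeighted, hwz, Real.sqrt_zero]
    exact div_nonneg (Real.sqrt_nonneg _) hden
  · have hlam : 0 < lamMinGen S M := lamMinGen_pos hN hS hM
    set lam := lamMinGen S M
    set κ := μ * lam + ν with hκ
    have hκpos : 0 < κ := by
      rcases lt_or_ge 0 μ with hμ' | hμ'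
      · exact add_pos_of_pos_of_nonneg (mul_pos hμ' hlam) hν
      · have hμ0 : μ = 0 := le_antisymm hμ' hμ
        have : 0 < ν := by linarith [hμν, hμ0]
        simp [hκ, hμ0, this]
    by_cases hwzero : w = 0
    · rw [hwzero]
      have : (0 : Fin N → ℝ) ⬝ᵥ M.mulVec 0 = 0 := by simp
      rw [normWeighted, normWeighted, this, Real.sqrt_zero]
      exact div_nonneg (Real.sqrt_nonneg _) (le_of_lt hκpos)
    · set a := w ⬝ᵥ M.mulVec w with ha
      have hapos : 0 < a := quad_pos hM hwzero
      have hspos : 0 < w ⬝ᵥ S.mulVec w := quad_pos hS hwzero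
      -- λ a ≤ w S w
      have hlam_le : lam * a ≤ w ⬝ᵥ S.mulVec w := by
        have := lamMinGen_le hS hM hwzero
        rw [le_div_iff₀ hapos] at this
        exact this
      -- κ a ≤ w ⬝ f
      have hwf : w ⬝ᵥ f = μ * (w ⬝ᵥ S.mulVec w) + ν * a := by
        rw [← hw]
        simp [add_mulVec, smul_mulVec, dotProduct_add, dotProduct_smul, smul_eq_mul, ha]
      have hκa : κ * a ≤ w ⬝ᵥ f := by
        rw [hwf, hκ]
        nlinarith
      -- Cauchy–Schwarz with u = M⁻¹ f
      set u := M⁻¹.mulVec f with hu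
      have hMinv : M * M⁻¹ = 1 := mul_nonsing_inv M (isUnit_iff_ne_zero.mpr hM.det_pos.ne')
      have hMu : M.mulVec u = f := by
        rw [hu, mulVec_mulVec, hMinv, one_mulVec]
      set b := f ⬝ᵥ M⁻¹.mulVec f with hb
      have hub : u ⬝ᵥ f = b := by
        rw [hb, hu, dotProduct_comm]
      have hcs : (w ⬝ᵥ f) ^ 2 ≤ a * b := by
        have := cs hM w u
        rwa [hMu, ← ha, hub] at this
      have hbnonneg : 0 ≤ b := by
        have := sq_nonneg (w ⬝ᵥ f)
        nlinarith
      -- conclude: κ² a ≤ b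
      have hkey : κ ^ 2 * a ≤ b := by
        have h1 : (κ * a) ^ 2 ≤ (w ⬝ᵥ f) ^ 2 := by
          have hκa0 : 0 ≤ κ * a := le_of_lt (mul_pos hκpos hapos)
          nlinarith
        nlinarith
      -- translate to square roots
      rw [normWeighted, normWeighted, ← ha, ← hb, le_div_iff₀ hκpos]
      have hsq : Real.sqrt a * κ = Real.sqrt (κ ^ 2 * a) := by
        rw [Real.sqrt_mul (sq_nonneg κ), Real.sqrt_sq (le_of_lt hκpos)]
        ring
      rw [hsq]
      exact Real.sqrt_le_sqrt hkey
end

section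
/- Let S and M be symmetric positive definite real N×N matrices, f ∈ ℝ^N, and for y ≥ 0 set w₋(y) := (S + e^{-y} M)^{-1} f and w₊(y) := (e^{-y} S + M)^{-1} f. For s ∈ (0,1) put s₋ := 1-s, s₊ := s, β₀(t) := sin(πt)/(πt), and define the semi-discrete solution ũ(s) := β₀(s₋) ∫₀^∞ w₋(y/s₋) e^{-y} dy + β₀(s₊) ∫₀^∞ w₊(y/s₊) e^{-y} dy (the Bochner integrals converge since the integrands are continuous with M-norm bounded by a constant times e^{-y}). Then for every s ∈ (0,1): ‖ũ(s)‖_M ≤ (4/π) · max(1, 1/λ_min(S, M)) · ‖f‖_{M^{-1}}. -/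
open Matrix MeasureTheory Real Set

/-- `w₋(y) = (S + e^{-y} M)⁻¹ f`. -/
noncomputable def wMinus {N : ℕ} (S M : Matrix (Fin N) (Fin N) ℝ) (f : Fin N → ℝ)
    (y : ℝ) : Fin N → ℝ :=
  (S + Real.exp (-y) • M)⁻¹.mulVec f

/-- `w₊(y) = (e^{-y} S + M)⁻¹ f`. -/
noncomputable def wPlus {N : ℕ} (S M : Matrix (Fin N) (Fin N) ℝ) (f : Fin N → ℝ)
    (y : ℝ) : Fin N → ℝ :=
  (Real.exp (-y) • S + M)⁻¹.mulVec f

/-- `β₀(t) = sin(πt)/(πt)`. -/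
noncomputable def beta0 (t : ℝ) : ℝ := Real.sin (Real.pi * t) / (Real.pi * t)

/-! ### Auxiliary lemmas -/

lemma symm_dp {N : ℕ} {M : Matrix (Fin N) (Fin N) ℝ} (hM : M.IsHermitian) (x y : Fin N → ℝ) :
    y ⬝ᵥ M.mulVec x = x ⬝ᵥ M.mulVec y := by
  have hMt : Mᵀ = M := by
    rw [← conjTranspose_eq_transpose_of_trivial, hM]
  calc y ⬝ᵥ M *ᵥ x = (M *ᵥ x) ⬝ᵥ y := dotProduct_comm _ _
    _ = (x ᵥ* Mᵀ) ⬝ᵥ y := by rw [vecMul_transpose]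
    _ = (x ᵥ* M) ⬝ᵥ y := by rw [hMt]
    _ = x ⬝ᵥ M *ᵥ y := (dotProduct_mulVec _ _ _).symm

lemma psd_cs {N : ℕ} {M : Matrix (Fin N) (Fin N) ℝ} (hM : M.PosSemidef) (x y : Fin N → ℝ) :
    (x ⬝ᵥ M.mulVec y)^2 ≤ (x ⬝ᵥ M.mulVec x) * (y ⬝ᵥ M.mulVec y) := by
  have h : ∀ t : ℝ, 0 ≤ (y ⬝ᵥ M.mulVec y) * (t*t) + (2 * (x ⬝ᵥ M.mulVec y)) * t + (x ⬝ᵥ M.mulVec x) := by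
    intro t
    have h0 := hM.dotProduct_mulVec_nonneg (x + t • y)
    rw [star_trivial] at h0
    have hsym := symm_dp hM.1 x y
    simp only [mulVec_add, mulVec_smul, dotProduct_add, add_dotProduct, smul_dotProduct,
      dotProduct_smul, smul_eq_mul] at h0
    rw [hsym] at h0
    ring_nf at h0 ⊢
    linarith [h0]
  have := discrim_le_zero h
  rw [discrim] at this
  nlinarith [this]

lemma psd_dp_nonneg {N : ℕ} {M : Matrix (Fin N) (Fin N) ℝ} (hM : M.PosSemidef) (x : Fin N → ℝ) :
    0 ≤ x ⬝ᵥ M.mulVec x := by simpa using hM.dotProduct_mulVec_nonneg x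

lemma nw_nonneg {N : ℕ} (M : Matrix (Fin N) (Fin N) ℝ) (x : Fin N → ℝ) :
    0 ≤ normWeighted M x := Real.sqrt_nonneg _

lemma nw_sq {N : ℕ} {M : Matrix (Fin N) (Fin N) ℝ} (hM : M.PosSemidef) (x : Fin N → ℝ) :
    normWeighted M x ^ 2 = x ⬝ᵥ M.mulVec x :=
  Real.sq_sqrt (psd_dp_nonneg hM x)

lemma dp_le_nw_mul {N : ℕ} {M : Matrix (Fin N) (Fin N) ℝ} (hM : M.PosSemidef) (x y : Fin N → ℝ) :
    x ⬝ᵥ M.mulVec y ≤ normWeighted M x * normWeighted M y := by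
  have h := psd_cs hM x y
  have h2 : (x ⬝ᵥ M.mulVec y)^2 ≤ (normWeighted M x * normWeighted M y)^2 := by
    rw [mul_pow, nw_sq hM, nw_sq hM]; exact h
  nlinarith [h2, mul_nonneg (nw_nonneg M x) (nw_nonneg M y)]

lemma nw_triangle {N : ℕ} {M : Matrix (Fin N) (Fin N) ℝ} (hM : M.PosSemidef) (x y : Fin N → ℝ) :
    normWeighted M (x + y) ≤ normWeighted M x + normWeighted M y := by
  have hx := nw_nonneg M x; have hy := nw_nonneg M y
  rw [← Real.sqrt_sq (by linarith : (0:ℝ) ≤ normWeighted M x + normWeighted M y)]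
  apply Real.sqrt_le_sqrt
  have hxy := dp_le_nw_mul hM x y
  have hsym := symm_dp hM.1 y x
  have ex : (x+y) ⬝ᵥ M.mulVec (x+y) = x ⬝ᵥ M.mulVec x + 2*(x ⬝ᵥ M.mulVec y) + y ⬝ᵥ M.mulVec y := by
    simp only [mulVec_add, dotProduct_add, add_dotProduct]
    rw [hsym]; ring
  rw [ex]
  have := nw_sq hM x; have := nw_sq hM y
  nlinarith

lemma nw_smul {N : ℕ} (M : Matrix (Fin N) (Fin N) ℝ) (c : ℝ) (x : Fin N → ℝ) :
    normWeighted M (c • x) = |c| * normWeighted M x := by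
  unfold normWeighted
  rw [mulVec_smul, smul_dotProduct, dotProduct_smul, smul_eq_mul, smul_eq_mul, ← mul_assoc,
    Real.sqrt_mul (mul_self_nonneg c), Real.sqrt_mul_self_eq_abs]

lemma dp_le_nw_inv {N : ℕ} {M : Matrix (Fin N) (Fin N) ℝ} (hM : M.PosDef) (x f : Fin N → ℝ) :
    x ⬝ᵥ f ≤ normWeighted M x * normWeighted M⁻¹ f := by
  have hdet : IsUnit M.det := hM.det_pos.ne'.isUnit
  set g := M⁻¹.mulVec f with hg
  have hf : M.mulVec g = f := by
    rw [hg, mulVec_mulVec, Matrix.mul_nonsing_inv _ hdet, one_mulVec]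
  have h1 : f ⬝ᵥ M⁻¹.mulVec f = g ⬝ᵥ M.mulVec g := by
    rw [← hg, ← hf]
    nth_rewrite 1 [hf]
    rw [symm_dp hM.isHermitian g, hf]
    exact dotProduct_comm f g
  have h2 : normWeighted M⁻¹ f = normWeighted M g := by unfold normWeighted; rw [h1]
  rw [h2, ← hf]
  exact dp_le_nw_mul hM.posSemidef x g

lemma posdef_add_smul {N : ℕ} {S M : Matrix (Fin N) (Fin N) ℝ}
    (hS : S.PosDef) (hM : M.PosDef) {c : ℝ} (hc : 0 < c) : (S + c • M).PosDef := by
  refine Matrix.PosDef.of_dotProduct_mulVec_pos ?_ ?_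
  · have h1 := hS.1; have h2 := hM.1
    unfold Matrix.IsHermitian at *
    rw [conjTranspose_add, conjTranspose_smul, h1, star_trivial, h2]
  · intro x hx
    have h1 := hS.dotProduct_mulVec_pos hx
    have h2 := hM.dotProduct_mulVec_pos hx
    rw [star_trivial] at h1 h2 ⊢
    rw [add_mulVec, dotProduct_add, smul_mulVec, dotProduct_smul, smul_eq_mul]
    nlinarith

lemma pd_dp_pos {N : ℕ} {M : Matrix (Fin N) (Fin N) ℝ} (hM : M.PosDef) {x : Fin N → ℝ}
    (hx : x ≠ 0) : 0 < x ⬝ᵥ M.mulVec x := by simpa using hM.dotProduct_mulVec_pos hx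

lemma quad_cont {N : ℕ} (A : Matrix (Fin N) (Fin N) ℝ) :
    Continuous (fun x : Fin N → ℝ => x ⬝ᵥ A.mulVec x) :=
  continuous_id.dotProduct (continuous_const.matrix_mulVec continuous_id)

lemma quad_scale {N : ℕ} (A : Matrix (Fin N) (Fin N) ℝ) (c : ℝ) (x : Fin N → ℝ) :
    (c • x) ⬝ᵥ A.mulVec (c • x) = c^2 * (x ⬝ᵥ A.mulVec x) := by
  rw [mulVec_smul, smul_dotProduct, dotProduct_smul, smul_eq_mul, smul_eq_mul]; ring

lemma posdef_pair_lower {N : ℕ} {S M : Matrix (Fin N) (Fin N) ℝ}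
    (hS : S.PosDef) (hM : M.PosDef) (hN : 0 < N) :
    ∃ m : ℝ, 0 < m ∧ m ≤ lamMinGen S M ∧
      ∀ x : Fin N → ℝ, m * (x ⬝ᵥ M.mulVec x) ≤ x ⬝ᵥ S.mulVec x := by
  haveI : Nonempty (Fin N) := Fin.pos_iff_nonempty.mp hN
  set q : (Fin N → ℝ) → ℝ := fun x => (x ⬝ᵥ S.mulVec x) / (x ⬝ᵥ M.mulVec x) with hq
  obtain ⟨x₁, hx₁⟩ : ∃ x : Fin N → ℝ, ‖x‖ = 1 := exists_norm_eq _ zero_le_one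
  have sphere_ne : ∀ x : Fin N → ℝ, ‖x‖ = 1 → x ≠ 0 := by
    intro x hx h0; rw [h0] at hx; simp at hx
  have hcont : ContinuousOn q (Metric.sphere (0 : Fin N → ℝ) 1) := by
    apply ContinuousOn.div (quad_cont S).continuousOn (quad_cont M).continuousOn
    intro x hx
    rw [Metric.mem_sphere, dist_zero_right] at hx
    exact (pd_dp_pos hM (sphere_ne x hx)).ne'
  obtain ⟨x₀, hx₀s, hmin⟩ := (isCompact_sphere (0 : Fin N → ℝ) 1).exists_isMinOn
    ⟨x₁, by simpa [Metric.mem_sphere, dist_zero_right] using hx₁⟩ hcont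
  rw [Metric.mem_sphere, dist_zero_right] at hx₀s
  have hx₀ : x₀ ≠ 0 := sphere_ne _ hx₀s
  set m := q x₀ with hm
  have hmpos : 0 < m := div_pos (pd_dp_pos hS hx₀) (pd_dp_pos hM hx₀)
  have key : ∀ x : Fin N → ℝ, x ≠ 0 → m ≤ q x := by
    intro x hx
    set c := ‖x‖⁻¹ with hc
    have hxn : ‖x‖ ≠ 0 := norm_ne_zero_iff.mpr hx
    have hcn : c ≠ 0 := inv_ne_zero hxn
    have hsx : ‖c • x‖ = 1 := by
      rw [norm_smul, hc, norm_inv, norm_norm, inv_mul_cancel₀ hxn]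
    have hqeq : q (c • x) = q x := by
      rw [hq]; simp only
      rw [quad_scale, quad_scale, mul_div_mul_left _ _ (by positivity : c^2 ≠ 0)]
    have h3 : q x₀ ≤ q (c • x) := hmin (by simpa [Metric.mem_sphere, dist_zero_right] using hsx)
    rwa [hqeq] at h3
  refine ⟨m, hmpos, ?_, ?_⟩
  · have hne : ((fun x : Fin N → ℝ => (x ⬝ᵥ S.mulVec x) / (x ⬝ᵥ M.mulVec x)) '' {x | x ≠ 0}).Nonempty :=
      ⟨q x₁, ⟨x₁, sphere_ne _ hx₁, rfl⟩⟩
    unfold lamMinGen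
    apply le_csInf hne
    rintro b ⟨x, hx, rfl⟩
    exact key x hx
  · intro x
    rcases eq_or_ne x 0 with rfl | hx
    · simp
    · have h1 := key x hx
      have h2 := pd_dp_pos hM hx
      rw [hq] at h1; simp only at h1
      rw [le_div_iff₀ h2] at h1
      linarith

lemma lamMin_facts {N : ℕ} {S M : Matrix (Fin N) (Fin N) ℝ}
    (hS : S.PosDef) (hM : M.PosDef) (hN : 0 < N) :
    0 < lamMinGen S M ∧ ∀ x : Fin N → ℝ, lamMinGen S M * (x ⬝ᵥ M.mulVec x) ≤ x ⬝ᵥ S.mulVec x := by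
  obtain ⟨m, hm, hmle, hmb⟩ := posdef_pair_lower hS hM hN
  refine ⟨lt_of_lt_of_le hm hmle, fun x => ?_⟩
  rcases eq_or_ne x 0 with rfl | hx
  · simp
  · have hle : lamMinGen S M ≤ (x ⬝ᵥ S.mulVec x) / (x ⬝ᵥ M.mulVec x) := by
      have hbdd : BddBelow ((fun x : Fin N → ℝ => (x ⬝ᵥ S.mulVec x) / (x ⬝ᵥ M.mulVec x)) '' {x | x ≠ 0}) := by
        refine ⟨m, ?_⟩
        rintro b ⟨z, hz, rfl⟩
        have h2 := pd_dp_pos hM hz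
        rw [le_div_iff₀ h2]
        linarith [hmb z]
      exact csInf_le hbdd ⟨x, hx, rfl⟩
    have h2 := pd_dp_pos hM hx
    rw [le_div_iff₀ h2] at hle
    linarith

lemma resolvent_bound {N : ℕ} {A M : Matrix (Fin N) (Fin N) ℝ} (hA : A.PosDef) (hM : M.PosDef)
    {c : ℝ} (hc : 0 < c) (h : ∀ x, c * (x ⬝ᵥ M.mulVec x) ≤ x ⬝ᵥ A.mulVec x) (f : Fin N → ℝ) :
    normWeighted M (A⁻¹.mulVec f) ≤ (1/c) * normWeighted M⁻¹ f := by
  set w := A⁻¹.mulVec f with hw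
  have hAw : A.mulVec w = f := by
    rw [hw, mulVec_mulVec, Matrix.mul_nonsing_inv _ hA.det_pos.ne'.isUnit, one_mulVec]
  have h1 : c * (w ⬝ᵥ M.mulVec w) ≤ w ⬝ᵥ f := by
    rw [← hAw]; exact h w
  have h2 : w ⬝ᵥ f ≤ normWeighted M w * normWeighted M⁻¹ f := dp_le_nw_inv hM w f
  have ha := nw_nonneg M w
  have hb := nw_nonneg M⁻¹ f
  have hsq := nw_sq hM.posSemidef w
  rcases eq_or_lt_of_le ha with h0 | h0
  · rw [← h0]; positivity
  · have : c * normWeighted M w ≤ normWeighted M⁻¹ f := by nlinarith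
    rw [div_mul_eq_mul_div, le_div_iff₀ hc, one_mul] at *
    nlinarith

/-- The continuous linear functional `v ↦ u ⬝ᵥ M v`. -/
noncomputable def dotCLM {N : ℕ} (M : Matrix (Fin N) (Fin N) ℝ) (u : Fin N → ℝ) :
    (Fin N → ℝ) →L[ℝ] ℝ :=
  LinearMap.toContinuousLinearMap
    { toFun := fun v => u ⬝ᵥ M.mulVec v
      map_add' := fun a b => by simp [mulVec_add, dotProduct_add]
      map_smul' := fun c a => by simp [mulVec_smul] }

@[simp] lemma dotCLM_apply {N : ℕ} (M : Matrix (Fin N) (Fin N) ℝ) (u v : Fin N → ℝ) :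
    dotCLM M u v = u ⬝ᵥ M.mulVec v := rfl

lemma integral_nw_bound {N : ℕ} {M : Matrix (Fin N) (Fin N) ℝ} (hM : M.PosDef)
    {g : ℝ → Fin N → ℝ} (hg : IntegrableOn g (Ioi 0)) {C : ℝ} (hC : 0 ≤ C)
    (hb : ∀ y ∈ Ioi (0:ℝ), normWeighted M (g y) ≤ C * Real.exp (-y)) :
    normWeighted M (∫ y in Ioi (0:ℝ), g y) ≤ C := by
  set u := ∫ y in Ioi (0:ℝ), g y with hu
  have ha := nw_nonneg M u
  rcases eq_or_lt_of_le ha with h0 | h0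
  · rw [← h0]; exact hC
  have hφ : (dotCLM M u) u = ∫ y in Ioi (0:ℝ), (dotCLM M u) (g y) := by
    rw [hu]; exact ((dotCLM M u).integral_comp_comm hg).symm
  have hint1 : IntegrableOn (fun y => (dotCLM M u) (g y)) (Ioi 0) :=
    (dotCLM M u).integrable_comp hg
  have hint2 : IntegrableOn (fun y => (normWeighted M u * C) * Real.exp (-y)) (Ioi 0) := by
    have := (exp_neg_integrableOn_Ioi 0 one_pos).const_mul (normWeighted M u * C)
    simpa [IntegrableOn] using this
  have hmono : ∫ y in Ioi (0:ℝ), (dotCLM M u) (g y)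
      ≤ ∫ y in Ioi (0:ℝ), (normWeighted M u * C) * Real.exp (-y) := by
    apply setIntegral_mono_on hint1 hint2 measurableSet_Ioi
    intro y hy
    calc (dotCLM M u) (g y) = u ⬝ᵥ M.mulVec (g y) := rfl
      _ ≤ normWeighted M u * normWeighted M (g y) := dp_le_nw_mul hM.posSemidef u (g y)
      _ ≤ normWeighted M u * (C * Real.exp (-y)) := by
          exact mul_le_mul_of_nonneg_left (hb y hy) ha
      _ = (normWeighted M u * C) * Real.exp (-y) := by ring
  have hval : ∫ y in Ioi (0:ℝ), (normWeighted M u * C) * Real.exp (-y)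
      = normWeighted M u * C := by
    rw [MeasureTheory.integral_const_mul, integral_exp_neg_Ioi_zero, mul_one]
  have hkey : u ⬝ᵥ M.mulVec u ≤ normWeighted M u * C := by
    have : (dotCLM M u) u ≤ normWeighted M u * C := by rw [hφ]; rw [hval] at hmono; exact hmono
    simpa using this
  have hsq := nw_sq hM.posSemidef u
  nlinarith

lemma cont_inv_mulVec {N : ℕ} {A : ℝ → Matrix (Fin N) (Fin N) ℝ} (hA : Continuous A)
    (hdet : ∀ t, (A t).det ≠ 0) (f : Fin N → ℝ) :
    Continuous fun t => ((A t)⁻¹).mulVec f := by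
  have h : (fun t => (A t)⁻¹) = fun t => ((A t).det)⁻¹ • (A t).adjugate := by
    funext t; rw [Matrix.inv_def, Ring.inverse_eq_inv]
  apply Continuous.matrix_mulVec _ continuous_const
  rw [h]
  exact (hA.matrix_det.inv₀ hdet).smul hA.matrix_adjugate

lemma norm_le_nw_one {N : ℕ} (v : Fin N → ℝ) : ‖v‖ ≤ normWeighted 1 v := by
  have hnn : 0 ≤ normWeighted 1 v := Real.sqrt_nonneg _
  rw [pi_norm_le_iff_of_nonneg hnn]
  intro i
  rw [Real.norm_eq_abs, ← Real.sqrt_sq_eq_abs]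
  apply Real.sqrt_le_sqrt
  rw [one_mulVec]
  have : v ⬝ᵥ v = ∑ j, v j * v j := rfl
  rw [this]
  have h2 : v i * v i ≤ ∑ j, v j * v j := Finset.single_le_sum (f := fun j => v j * v j)
    (fun j _ => mul_self_nonneg (v j)) (Finset.mem_univ i)
  nlinarith [h2]

lemma cos_key : ∀ u : ℝ, 0 ≤ u → u ≤ 1/2 → Real.cos (Real.pi * u) ≤ 1 - 4 * u^2 := by
  intro u hu0 hu2
  have hπ := Real.pi_pos
  have hconc := strictConcaveOn_sin_Icc.concaveOn
  have hmem0 : (0:ℝ) ∈ Icc (0:ℝ) π := ⟨le_refl _, le_of_lt hπ⟩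
  have hmem1 : (π/4 : ℝ) ∈ Icc (0:ℝ) π := ⟨by positivity, by linarith⟩
  have ha : (0:ℝ) ≤ 1 - 2*u := by linarith
  have hb : (0:ℝ) ≤ 2*u := by linarith
  have hab : (1 - 2*u) + 2*u = 1 := by ring
  have hcc := hconc.2 hmem0 hmem1 ha hb hab
  rw [Real.sin_zero, Real.sin_pi_div_four] at hcc
  have harg : (1 - 2*u) • (0:ℝ) + (2*u) • (π/4 : ℝ) = π * u / 2 := by
    simp [smul_eq_mul]; ring
  rw [harg] at hcc
  have hsin : Real.sqrt 2 * u ≤ Real.sin (π * u / 2) := by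
    have he : (1 - 2*u) • (0:ℝ) + (2*u) • (Real.sqrt 2 / 2) = Real.sqrt 2 * u := by
      simp only [smul_eq_mul]; ring
    rw [he] at hcc; exact hcc
  have hs2 : Real.sqrt 2 ^ 2 = 2 := Real.sq_sqrt (by norm_num)
  have hsq : 2 * u^2 ≤ Real.sin (π * u / 2) ^ 2 := by
    have h0 : 0 ≤ Real.sqrt 2 * u := by positivity
    nlinarith
  have hid : Real.sin (π * u / 2) ^ 2 = 1/2 - Real.cos (π * u) / 2 := by
    have := Real.sin_sq_eq_half_sub (π * u / 2)
    rw [this]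
    ring_nf
  nlinarith [hid, hsq]

lemma sin_le_four_mul {s : ℝ} (h1 : 0 < s) (h2 : s < 1) :
    Real.sin (Real.pi * s) ≤ 4 * (s * (1 - s)) := by
  have hid : Real.sin (π * s) = Real.cos (π * (s - 1/2)) := by
    have : π * (s - 1/2) = π * s - π/2 := by ring
    rw [this, Real.cos_sub_pi_div_two]
  rcases le_total s (1/2) with h | h
  · have key := cos_key (1/2 - s) (by linarith) (by linarith)
    have : Real.cos (π * (s - 1/2)) = Real.cos (π * (1/2 - s)) := by
      rw [← Real.cos_neg]; ring_nf
    rw [hid, this]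
    nlinarith [key]
  · have key := cos_key (s - 1/2) (by linarith) (by linarith)
    rw [hid]
    nlinarith [key]

lemma beta0_nonneg {s : ℝ} (h1 : 0 < s) (h2 : s < 1) : 0 ≤ beta0 s := by
  have hπ := Real.pi_pos
  apply div_nonneg _ (by positivity)
  apply Real.sin_nonneg_of_nonneg_of_le_pi (by positivity)
  nlinarith

lemma beta0_sum_le {s : ℝ} (h1 : 0 < s) (h2 : s < 1) :
    beta0 (1 - s) + beta0 s ≤ 4 / Real.pi := by
  have hπ := Real.pi_pos
  have hsin := sin_le_four_mul h1 h2
  unfold beta0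
  have h1s : Real.sin (π * (1 - s)) = Real.sin (π * s) := by
    have : π * (1 - s) = π - π * s := by ring
    rw [this, Real.sin_pi_sub]
  rw [h1s]
  rw [div_add_div _ _ (by nlinarith : (0:ℝ) < π * (1-s)).ne' (by positivity : (0:ℝ) < π * s).ne',
    div_le_div_iff₀ (mul_pos (mul_pos hπ (by linarith : (0:ℝ) < 1 - s)) (mul_pos hπ h1)) hπ]
  nlinarith [mul_le_mul_of_nonneg_left hsin (mul_pos hπ hπ).le]

/-- s-uniform stability of the semi-discrete solution (matrix form): with
`ũ(s) = β₀(1-s) ∫₀^∞ w₋(y/(1-s)) e^{-y} dy + β₀(s) ∫₀^∞ w₊(y/s) e^{-y} dy`,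
for every `s ∈ (0,1)`,
`‖ũ(s)‖_M ≤ (4/π) max(1, 1/λ_min(S,M)) ‖f‖_{M⁻¹}`. -/
theorem semidiscrete_stability {N : ℕ} (S M : Matrix (Fin N) (Fin N) ℝ)
    (hS : S.PosDef) (hM : M.PosDef) (f : Fin N → ℝ)
    (s : ℝ) (hs : s ∈ Set.Ioo (0:ℝ) 1) :
    normWeighted M
        (beta0 (1 - s) •
            (∫ y in Set.Ioi (0:ℝ), Real.exp (-y) • wMinus S M f (y / (1 - s))) +
          beta0 s •
            (∫ y in Set.Ioi (0:ℝ), Real.exp (-y) • wPlus S M f (y / s))) ≤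
      (4 / Real.pi) * max 1 (1 / lamMinGen S M) * normWeighted M⁻¹ f := by
  obtain ⟨hs0, hs1⟩ := hs
  have hπ := Real.pi_pos
  rcases Nat.eq_zero_or_pos N with hN0 | hN
  · subst hN0
    have hL : ∀ v : Fin 0 → ℝ, normWeighted M v = 0 := by
      intro v; unfold normWeighted; simp [dotProduct]
    rw [hL]
    have h1 : (0:ℝ) ≤ 4 / Real.pi := by positivity
    have h2 : (0:ℝ) ≤ max 1 (1 / lamMinGen S M) := le_trans zero_le_one (le_max_left _ _)
    have h3 : (0:ℝ) ≤ normWeighted M⁻¹ f := nw_nonneg _ _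
    exact mul_nonneg (mul_nonneg h1 h2) h3
  obtain ⟨hlam_pos, hlam_bound⟩ := lamMin_facts hS hM hN
  set lam := lamMinGen S M with hlam
  set C := max 1 (1 / lam) with hC
  have hC1 : (1:ℝ) ≤ C := le_max_left _ _
  have hC0 : (0:ℝ) < C := lt_of_lt_of_le one_pos hC1
  have hClam : 1 / lam ≤ C := le_max_right _ _
  set b := normWeighted M⁻¹ f with hbdef
  have hb0 : 0 ≤ b := nw_nonneg _ _
  have hCb : 0 ≤ C * b := mul_nonneg hC0.le hb0
  -- pos-definiteness of the shifted matrices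
  have hpdm : ∀ t : ℝ, (S + Real.exp (-t) • M).PosDef :=
    fun t => posdef_add_smul hS hM (Real.exp_pos _)
  have hpdp : ∀ t : ℝ, (Real.exp (-t) • S + M).PosDef := by
    intro t
    have := posdef_add_smul hM hS (Real.exp_pos (-t))
    rwa [add_comm] at this
  -- M-norm bounds on w₋, w₊
  have hwm : ∀ t : ℝ, normWeighted M (wMinus S M f t) ≤ C * b := by
    intro t
    have hq : ∀ x, lam * (x ⬝ᵥ M.mulVec x) ≤ x ⬝ᵥ (S + Real.exp (-t) • M).mulVec x := by
      intro x
      have h1 := hlam_bound x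
      have h2 : 0 ≤ x ⬝ᵥ M.mulVec x := psd_dp_nonneg hM.posSemidef x
      rw [add_mulVec, dotProduct_add, smul_mulVec, dotProduct_smul, smul_eq_mul]
      nlinarith [Real.exp_pos (-t)]
    have hres := resolvent_bound (hpdm t) hM hlam_pos hq f
    unfold wMinus
    calc normWeighted M ((S + Real.exp (-t) • M)⁻¹.mulVec f) ≤ (1/lam) * b := hres
      _ ≤ C * b := mul_le_mul_of_nonneg_right hClam hb0
  have hwp : ∀ t : ℝ, normWeighted M (wPlus S M f t) ≤ C * b := by
    intro t
    have hq : ∀ x, 1 * (x ⬝ᵥ M.mulVec x) ≤ x ⬝ᵥ (Real.exp (-t) • S + M).mulVec x := by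
      intro x
      have h1 : 0 ≤ x ⬝ᵥ S.mulVec x := psd_dp_nonneg hS.posSemidef x
      rw [add_mulVec, dotProduct_add, smul_mulVec, dotProduct_smul, smul_eq_mul, one_mul]
      nlinarith [Real.exp_pos (-t)]
    have hres := resolvent_bound (hpdp t) hM one_pos hq f
    unfold wPlus
    calc normWeighted M ((Real.exp (-t) • S + M)⁻¹.mulVec f) ≤ (1/1) * b := hres
      _ = b := by norm_num
      _ ≤ C * b := by nlinarith
  -- Euclidean bounds (for integrability)
  obtain ⟨mS, hmS, -, hmSb⟩ := posdef_pair_lower hS Matrix.PosDef.one hN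
  obtain ⟨mM, hmM, -, hmMb⟩ := posdef_pair_lower hM Matrix.PosDef.one hN
  set D₁ := (1/mS) * normWeighted (1 : Matrix (Fin N) (Fin N) ℝ) f with hD₁
  set D₂ := (1/mM) * normWeighted (1 : Matrix (Fin N) (Fin N) ℝ) f with hD₂
  have hnormm : ∀ t : ℝ, ‖wMinus S M f t‖ ≤ D₁ := by
    intro t
    have hq : ∀ x, mS * (x ⬝ᵥ (1 : Matrix (Fin N) (Fin N) ℝ).mulVec x)
        ≤ x ⬝ᵥ (S + Real.exp (-t) • M).mulVec x := by
      intro x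
      have h1 := hmSb x
      have h2 : 0 ≤ x ⬝ᵥ M.mulVec x := psd_dp_nonneg hM.posSemidef x
      rw [add_mulVec, dotProduct_add, smul_mulVec, dotProduct_smul, smul_eq_mul]
      nlinarith [Real.exp_pos (-t)]
    have hres := resolvent_bound (hpdm t) Matrix.PosDef.one hmS hq f
    rw [inv_one] at hres
    unfold wMinus
    exact le_trans (norm_le_nw_one _) hres
  have hnormp : ∀ t : ℝ, ‖wPlus S M f t‖ ≤ D₂ := by
    intro t
    have hq : ∀ x, mM * (x ⬝ᵥ (1 : Matrix (Fin N) (Fin N) ℝ).mulVec x)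
        ≤ x ⬝ᵥ (Real.exp (-t) • S + M).mulVec x := by
      intro x
      have h1 := hmMb x
      have h2 : 0 ≤ x ⬝ᵥ S.mulVec x := psd_dp_nonneg hS.posSemidef x
      rw [add_mulVec, dotProduct_add, smul_mulVec, dotProduct_smul, smul_eq_mul]
      nlinarith [Real.exp_pos (-t)]
    have hres := resolvent_bound (hpdp t) Matrix.PosDef.one hmM hq f
    rw [inv_one] at hres
    unfold wPlus
    exact le_trans (norm_le_nw_one _) hres
  -- continuity of the integrands
  have hdetm : ∀ t : ℝ, (S + Real.exp (-t) • M).det ≠ 0 := fun t => (hpdm t).det_pos.ne'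
  have hdetp : ∀ t : ℝ, (Real.exp (-t) • S + M).det ≠ 0 := fun t => (hpdp t).det_pos.ne'
  have hcontm : Continuous fun y : ℝ => Real.exp (-y) • wMinus S M f (y / (1 - s)) := by
    have hA : Continuous fun y : ℝ => S + Real.exp (-(y / (1 - s))) • M :=
      continuous_const.add ((Real.continuous_exp.comp
        ((continuous_id.div_const _).neg)).smul continuous_const)
    have hc := cont_inv_mulVec hA (fun y => hdetm (y / (1 - s))) f
    unfold wMinus
    exact (Real.continuous_exp.comp continuous_neg).smul hc
  have hcontp : Continuous fun y : ℝ => Real.exp (-y) • wPlus S M f (y / s) := by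
    have hA : Continuous fun y : ℝ => Real.exp (-(y / s)) • S + M :=
      ((Real.continuous_exp.comp
        ((continuous_id.div_const _).neg)).smul continuous_const).add continuous_const
    have hc := cont_inv_mulVec hA (fun y => hdetp (y / s)) f
    unfold wPlus
    exact (Real.continuous_exp.comp continuous_neg).smul hc
  -- integrability of the integrands
  have hintm : IntegrableOn (fun y => Real.exp (-y) • wMinus S M f (y / (1 - s))) (Ioi 0) := by
    have hbound : IntegrableOn (fun y => D₁ * Real.exp (-y)) (Ioi 0) := by
      have := (exp_neg_integrableOn_Ioi 0 one_pos).const_mul D₁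
      simpa [IntegrableOn] using this
    apply Integrable.mono' hbound hcontm.aestronglyMeasurable
    apply ae_of_all
    intro y
    rw [norm_smul, Real.norm_eq_abs, Real.abs_exp]
    calc Real.exp (-y) * ‖wMinus S M f (y / (1 - s))‖ ≤ Real.exp (-y) * D₁ :=
          mul_le_mul_of_nonneg_left (hnormm _) (Real.exp_pos _).le
      _ = D₁ * Real.exp (-y) := mul_comm _ _
  have hintp : IntegrableOn (fun y => Real.exp (-y) • wPlus S M f (y / s)) (Ioi 0) := by
    have hbound : IntegrableOn (fun y => D₂ * Real.exp (-y)) (Ioi 0) := by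
      have := (exp_neg_integrableOn_Ioi 0 one_pos).const_mul D₂
      simpa [IntegrableOn] using this
    apply Integrable.mono' hbound hcontp.aestronglyMeasurable
    apply ae_of_all
    intro y
    rw [norm_smul, Real.norm_eq_abs, Real.abs_exp]
    calc Real.exp (-y) * ‖wPlus S M f (y / s)‖ ≤ Real.exp (-y) * D₂ :=
          mul_le_mul_of_nonneg_left (hnormp _) (Real.exp_pos _).le
      _ = D₂ * Real.exp (-y) := mul_comm _ _
  -- norm bounds on the integrals
  have hIm : normWeighted M (∫ y in Ioi (0:ℝ), Real.exp (-y) • wMinus S M f (y / (1 - s)))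
      ≤ C * b := by
    apply integral_nw_bound hM hintm hCb
    intro y hy
    rw [nw_smul, Real.abs_exp]
    calc Real.exp (-y) * normWeighted M (wMinus S M f (y / (1 - s)))
        ≤ Real.exp (-y) * (C * b) := mul_le_mul_of_nonneg_left (hwm _) (Real.exp_pos _).le
      _ = (C * b) * Real.exp (-y) := mul_comm _ _
  have hIp : normWeighted M (∫ y in Ioi (0:ℝ), Real.exp (-y) • wPlus S M f (y / s))
      ≤ C * b := by
    apply integral_nw_bound hM hintp hCb
    intro y hy
    rw [nw_smul, Real.abs_exp]
    calc Real.exp (-y) * normWeighted M (wPlus S M f (y / s))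
        ≤ Real.exp (-y) * (C * b) := mul_le_mul_of_nonneg_left (hwp _) (Real.exp_pos _).le
      _ = (C * b) * Real.exp (-y) := mul_comm _ _
  -- assemble
  set Im := ∫ y in Ioi (0:ℝ), Real.exp (-y) • wMinus S M f (y / (1 - s)) with hImdef
  set Ip := ∫ y in Ioi (0:ℝ), Real.exp (-y) • wPlus S M f (y / s) with hIpdef
  have hβm := beta0_nonneg (show (0:ℝ) < 1 - s by linarith) (show (1:ℝ) - s < 1 by linarith)
  have hβp := beta0_nonneg hs0 hs1
  have hsum := beta0_sum_le hs0 hs1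
  have htri := nw_triangle hM.posSemidef (beta0 (1 - s) • Im) (beta0 s • Ip)
  rw [nw_smul, nw_smul, abs_of_nonneg hβm, abs_of_nonneg hβp] at htri
  have hfin : beta0 (1 - s) * normWeighted M Im + beta0 s * normWeighted M Ip
      ≤ (4 / Real.pi) * (C * b) := by
    calc beta0 (1 - s) * normWeighted M Im + beta0 s * normWeighted M Ip
        ≤ beta0 (1 - s) * (C * b) + beta0 s * (C * b) :=
          add_le_add (mul_le_mul_of_nonneg_left hIm hβm) (mul_le_mul_of_nonneg_left hIp hβp)
      _ = (beta0 (1 - s) + beta0 s) * (C * b) := by ring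
      _ ≤ (4 / Real.pi) * (C * b) := mul_le_mul_of_nonneg_right hsum hCb
  calc normWeighted M (beta0 (1 - s) • Im + beta0 s • Ip)
      ≤ beta0 (1 - s) * normWeighted M Im + beta0 s * normWeighted M Ip := htri
    _ ≤ (4 / Real.pi) * (C * b) := hfin
    _ = (4 / Real.pi) * C * b := by ring
end

section
/- Let S and M be symmetric positive definite real N×N matrices, let f ∈ ℝ^N, and for y ≥ 0 set w₋(y) := (S + e^{-y} M)^{-1} f. Let s₋ ∈ (0,1), and let (y_j, τ_j)_{j=1}^{Q} be a quadrature rule with y_j ≥ 0 and τ_j ≥ 0. For a > 0 and b > 0 define g(a,b) := | ∫₀^∞ e^{-y}/(1 + a e^{-b y}) dy − Σ_{j=1}^{Q} τ_j/(1 + a e^{-b y_j}) |. Then ‖ ∫₀^∞ w₋(y/s₋) e^{-y} dy − Σ_{j=1}^{Q} τ_j w₋(y_j/s₋) ‖_M ≤ ‖f‖_{M^{-1}} · (1/λ_min(S,M)) · sup { g(a, 1/s₋) : a ∈ [1/λ_max(S,M), 1/λ_min(S,M)] }, where λ_min(S,M) and λ_max(S,M) are the smallest and largest generalized eigenvalues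 of (S,M), i.e. the infimum and supremum over nonzero x of (xᵀ S x)/(xᵀ M x). -/
open Matrix MeasureTheory Real Set

/-- The largest generalized eigenvalue of the pair `(S, M)`:
`λ_max(S, M) = sup_{x ≠ 0} (xᵀ S x)/(xᵀ M x)`. -/
noncomputable def lamMaxGen {N : ℕ} (S M : Matrix (Fin N) (Fin N) ℝ) : ℝ :=
  sSup ((fun x : Fin N → ℝ => (x ⬝ᵥ S.mulVec x) / (x ⬝ᵥ M.mulVec x)) '' {x | x ≠ 0})

/-- Scalar quadrature error `g(a,b)` for the rule `(y_j, τ_j)_{j=1}^Q`: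
`g(a,b) = |∫₀^∞ e^{-y}/(1 + a e^{-by}) dy − Σ_j τ_j/(1 + a e^{-b y_j})|`. -/
noncomputable def gQuad (Q : ℕ) (y τ : Fin Q → ℝ) (a b : ℝ) : ℝ :=
  |(∫ t in Set.Ioi (0:ℝ), Real.exp (-t) / (1 + a * Real.exp (-b * t))) -
    ∑ j, τ j / (1 + a * Real.exp (-b * y j))|

lemma quadAux_dot_mulVec_left {N : ℕ} (P : Matrix (Fin N) (Fin N) ℝ) (x u : Fin N → ℝ) :
    (P *ᵥ x) ⬝ᵥ u = x ⬝ᵥ (Pᵀ *ᵥ u) := by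
  rw [dotProduct_mulVec, vecMul_transpose]

lemma quadAux_integrableOn {g : ℝ → ℝ} (hg : Continuous g) (K : ℝ)
    (hbd : ∀ t, |g t| ≤ K * Real.exp (-t)) :
    MeasureTheory.IntegrableOn g (Set.Ioi (0:ℝ)) := by
  have hexp : IntegrableOn (fun t => K * Real.exp (-t)) (Ioi (0:ℝ)) := by
    simpa [neg_one_mul, IntegrableOn] using (exp_neg_integrableOn_Ioi 0 one_pos).const_mul K
  exact hexp.mono' hg.aestronglyMeasurable.restrict (Filter.Eventually.of_forall hbd)

lemma quadAux_scalar_id {L E c : ℝ} (hL : 0 < L) (hE : 0 < E) :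
    c * (L + E)⁻¹ = L⁻¹ * (c / (1 + L⁻¹ * E)) := by
  have h1 : L + E ≠ 0 := by positivity
  have h2 : L ≠ 0 := ne_of_gt hL
  field_simp

lemma quadAux_expint : IntegrableOn (fun t => Real.exp (-t)) (Set.Ioi (0:ℝ)) := by
  simpa [neg_one_mul] using (exp_neg_integrableOn_Ioi 0 one_pos)

/-- The '−' half of Proposition 4.1: the vector-valued quadrature error for `w₋` is
controlled by the scalar quadrature error function `g` over the spectral interval
`I₋ = [1/λ_max(S,M), 1/λ_min(S,M)]`. -/
theorem quad_error_minus {N : ℕ} (S M : Matrix (Fin N) (Fin N) ℝ)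
    (hS : S.PosDef) (hM : M.PosDef) (f : Fin N → ℝ)
    (sm : ℝ) (hsm : sm ∈ Set.Ioo (0:ℝ) 1)
    (Q : ℕ) (y τ : Fin Q → ℝ) (hy : ∀ j, 0 ≤ y j) (hτ : ∀ j, 0 ≤ τ j) :
    normWeighted M
        ((∫ t in Set.Ioi (0:ℝ), Real.exp (-t) • wMinus S M f (t / sm)) -
          ∑ j, τ j • wMinus S M f (y j / sm)) ≤
      normWeighted M⁻¹ f * (1 / lamMinGen S M) *
        sSup ((fun a => gQuad Q y τ a (1 / sm)) ''
          Set.Icc (1 / lamMaxGen S M) (1 / lamMinGen S M)) := by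
  obtain ⟨hsm0, hsm1⟩ := hsm
  rcases Nat.eq_zero_or_pos N with hN | hN
  · subst hN
    have hz : ∀ (P : Matrix (Fin 0) (Fin 0) ℝ) (v : Fin 0 → ℝ), v ⬝ᵥ P *ᵥ v = 0 := by
      intro P v; simp [dotProduct]
    simp only [normWeighted, mulVec, hz, Real.sqrt_zero, zero_mul, le_refl]
  haveI : Nonempty (Fin N) := ⟨⟨0, hN⟩⟩
  -- square root of M
  set R := (open scoped MatrixOrder in CFC.sqrt M) with hRdef
  have hRH : R.IsHermitian := open scoped MatrixOrder in (CFC.sqrt_nonneg M).posSemidef.isHermitian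
  have hRRM : R * R = M := open scoped MatrixOrder in CFC.sqrt_mul_sqrt_self M hM.posSemidef.nonneg
  have hdetR : IsUnit R.det := by
    rw [isUnit_iff_ne_zero]
    intro h
    have h2 : M.det = 0 := by rw [← hRRM, det_mul, h, mul_zero]
    exact (ne_of_gt hM.det_pos) h2
  have hRiR : R⁻¹ * R = 1 := nonsing_inv_mul R hdetR
  have hRRi : R * R⁻¹ = 1 := mul_nonsing_inv R hdetR
  have hRiH : R⁻¹.IsHermitian := hRH.inv
  have hRT : Rᵀ = R := by rw [← conjTranspose_eq_transpose_of_trivial, hRH.eq]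
  have hRiT : (R⁻¹)ᵀ = R⁻¹ := by rw [← conjTranspose_eq_transpose_of_trivial, hRiH.eq]
  clear_value R
  -- the matrix A
  set A := R⁻¹ * S * R⁻¹ with hAdef
  have hApd : A.PosDef := by
    refine Matrix.PosDef.of_dotProduct_mulVec_pos ?_ ?_
    · show Aᴴ = A
      simp only [hAdef, conjTranspose_mul, hRiH.eq, hS.isHermitian.eq, Matrix.mul_assoc]
    · intro x hx
      have hx2 : R⁻¹ *ᵥ x ≠ 0 := by
        intro h
        apply hx
        have h2 : R *ᵥ (R⁻¹ *ᵥ x) = 0 := by rw [h, mulVec_zero]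
        rwa [mulVec_mulVec, hRRi, one_mulVec] at h2
      have h3 := hS.dotProduct_mulVec_pos hx2
      have h4 : star x ⬝ᵥ A *ᵥ x = star (R⁻¹ *ᵥ x) ⬝ᵥ S *ᵥ (R⁻¹ *ᵥ x) := by
        simp only [star_trivial, hAdef, ← mulVec_mulVec]
        rw [quadAux_dot_mulVec_left, hRiT]
      rw [h4]; exact h3
  have hAH : A.IsHermitian := hApd.isHermitian
  set lam := hAH.eigenvalues with hlamdef
  set U : Matrix (Fin N) (Fin N) ℝ := (hAH.eigenvectorUnitary : Matrix (Fin N) (Fin N) ℝ)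
    with hUdef
  have hUmem := hAH.eigenvectorUnitary.2
  rw [Unitary.mem_iff] at hUmem
  have hUsU : star U * U = 1 := hUmem.1
  have hUUs : U * star U = 1 := hUmem.2
  have hUinv : U⁻¹ = star U := inv_eq_left_inv hUsU
  have hsUinv : (star U)⁻¹ = U := inv_eq_left_inv hUUs
  have hUT : Uᵀ = star U := by
    rw [star_eq_conjTranspose, conjTranspose_eq_transpose_of_trivial]
  have hsUT : (star U)ᵀ = U := by
    rw [star_eq_conjTranspose, conjTranspose_eq_transpose_of_trivial, transpose_transpose]
  have hspec : A = U * diagonal lam * star U := by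
    have h := hAH.spectral_theorem
    rwa [RCLike.ofReal_real_eq_id, Function.id_comp] at h
  have hlam_pos : ∀ i, 0 < lam i := fun i => hApd.eigenvalues_pos i
  clear_value lam U
  clear_value A
  have hUdot : ∀ a b : Fin N → ℝ, (U *ᵥ a) ⬝ᵥ (U *ᵥ b) = a ⬝ᵥ b := by
    intro a b
    rw [quadAux_dot_mulVec_left, hUT, mulVec_mulVec, hUsU, one_mulVec]
  have hSRAR : S = R * A * R := by
    rw [hAdef]
    simp only [← Matrix.mul_assoc]
    rw [hRRi, Matrix.one_mul, Matrix.mul_assoc, hRiR, Matrix.mul_one]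
  -- quadratic forms through the eigenbasis
  have hquadA : ∀ z : Fin N → ℝ,
      z ⬝ᵥ A *ᵥ z = ∑ i, lam i * ((star U *ᵥ z) i)^2 ∧
      z ⬝ᵥ z = ∑ i, ((star U *ᵥ z) i)^2 := by
    intro z
    have hzw : z = U *ᵥ (star U *ᵥ z) := by rw [mulVec_mulVec, hUUs, one_mulVec]
    constructor
    · have h1 : A *ᵥ z = U *ᵥ (diagonal lam *ᵥ (star U *ᵥ z)) := by
        rw [hspec, ← mulVec_mulVec, ← mulVec_mulVec]
      calc z ⬝ᵥ A *ᵥ z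
          = (U *ᵥ (star U *ᵥ z)) ⬝ᵥ (U *ᵥ (diagonal lam *ᵥ (star U *ᵥ z))) := by
            rw [h1, ← hzw]
        _ = (star U *ᵥ z) ⬝ᵥ (diagonal lam *ᵥ (star U *ᵥ z)) := hUdot _ _
        _ = ∑ i, lam i * ((star U *ᵥ z) i)^2 := by
            simp only [dotProduct, mulVec_diagonal]
            exact Finset.sum_congr rfl fun i _ => by ring
    · calc z ⬝ᵥ z = (U *ᵥ (star U *ᵥ z)) ⬝ᵥ (U *ᵥ (star U *ᵥ z)) := by rw [← hzw]
        _ = (star U *ᵥ z) ⬝ᵥ (star U *ᵥ z) := hUdot _ _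
        _ = ∑ i, ((star U *ᵥ z) i)^2 := by simp [dotProduct, pow_two]
  have hxSM : ∀ x : Fin N → ℝ,
      x ⬝ᵥ S *ᵥ x = (R *ᵥ x) ⬝ᵥ A *ᵥ (R *ᵥ x) ∧
      x ⬝ᵥ M *ᵥ x = (R *ᵥ x) ⬝ᵥ (R *ᵥ x) := by
    intro x
    constructor
    · rw [quadAux_dot_mulVec_left, hRT, mulVec_mulVec, mulVec_mulVec, ← hSRAR]
    · rw [quadAux_dot_mulVec_left, hRT, mulVec_mulVec, hRRM]
  -- Rayleigh quotient facts
  have hlamMin_eq : lamMinGen S M =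
      sInf ((fun x : Fin N → ℝ => (x ⬝ᵥ S.mulVec x) / (x ⬝ᵥ M.mulVec x)) '' {x | x ≠ 0}) := rfl
  have hmemΩ : ∀ i, lam i ∈
      ((fun x : Fin N → ℝ => (x ⬝ᵥ S.mulVec x) / (x ⬝ᵥ M.mulVec x)) '' {x | x ≠ 0}) := by
    intro i
    have hw : star U *ᵥ ⇑(hAH.eigenvectorBasis i) = Pi.single i 1 := by
      rw [hUdef]; exact hAH.star_eigenvectorUnitary_mulVec i
    have hz : R *ᵥ (R⁻¹ *ᵥ ⇑(hAH.eigenvectorBasis i)) = ⇑(hAH.eigenvectorBasis i) := by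
      rw [mulVec_mulVec, hRRi, one_mulVec]
    refine ⟨R⁻¹ *ᵥ ⇑(hAH.eigenvectorBasis i), ?_, ?_⟩
    · show R⁻¹ *ᵥ ⇑(hAH.eigenvectorBasis i) ≠ 0
      intro h
      have h2 : star U *ᵥ (R *ᵥ (R⁻¹ *ᵥ ⇑(hAH.eigenvectorBasis i))) = Pi.single i 1 := by
        rw [hz, hw]
      rw [h, mulVec_zero, mulVec_zero] at h2
      have h3 := congrFun h2 i
      simp [Pi.single_apply] at h3
    · obtain ⟨hqS, hqM⟩ := hxSM (R⁻¹ *ᵥ ⇑(hAH.eigenvectorBasis i))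
      obtain ⟨hA1, hA2⟩ := hquadA (R *ᵥ (R⁻¹ *ᵥ ⇑(hAH.eigenvectorBasis i)))
      dsimp only
      rw [hqS, hqM, hA1, hA2, hz, hw]
      simp [Pi.single_apply]
  set mn := Finset.univ.inf' Finset.univ_nonempty lam with hmn
  set mx := Finset.univ.sup' Finset.univ_nonempty lam with hmx
  have hmn_pos : 0 < mn := by
    rw [hmn, Finset.lt_inf'_iff]
    exact fun i _ => hlam_pos i
  have hΩ_bounds : ∀ q ∈
      ((fun x : Fin N → ℝ => (x ⬝ᵥ S.mulVec x) / (x ⬝ᵥ M.mulVec x)) '' {x | x ≠ 0}),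
      mn ≤ q ∧ q ≤ mx := by
    rintro q ⟨x, hx, rfl⟩
    simp only [Set.mem_setOf_eq] at hx
    have hz0 : R *ᵥ x ≠ 0 := by
      intro h
      apply hx
      have h2 : R⁻¹ *ᵥ (R *ᵥ x) = 0 := by rw [h, mulVec_zero]
      rwa [mulVec_mulVec, hRiR, one_mulVec] at h2
    have hw0 : star U *ᵥ (R *ᵥ x) ≠ 0 := by
      intro h
      apply hz0
      have h2 : U *ᵥ (star U *ᵥ (R *ᵥ x)) = 0 := by rw [h, mulVec_zero]
      rwa [mulVec_mulVec, hUUs, one_mulVec] at h2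
    have hwpos : 0 < ∑ i, ((star U *ᵥ (R *ᵥ x)) i)^2 := by
      obtain ⟨j, hj⟩ := Function.ne_iff.mp hw0
      refine Finset.sum_pos' (fun i _ => sq_nonneg _) ⟨j, Finset.mem_univ j, ?_⟩
      rw [← sq_abs]
      exact pow_pos (abs_pos.mpr hj) 2
    obtain ⟨hqS, hqM⟩ := hxSM x
    obtain ⟨hA1, hA2⟩ := hquadA (R *ᵥ x)
    dsimp only
    rw [hqS, hqM, hA1, hA2]
    constructor
    · rw [le_div_iff₀ hwpos, Finset.mul_sum]
      exact Finset.sum_le_sum fun i _ => mul_le_mul_of_nonneg_right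
        (Finset.inf'_le lam (Finset.mem_univ i)) (sq_nonneg _)
    · rw [div_le_iff₀ hwpos, Finset.mul_sum]
      exact Finset.sum_le_sum fun i _ => mul_le_mul_of_nonneg_right
        (Finset.le_sup' lam (Finset.mem_univ i)) (sq_nonneg _)
  have hbddB : BddBelow ((fun x : Fin N → ℝ => (x ⬝ᵥ S.mulVec x) / (x ⬝ᵥ M.mulVec x)) '' {x | x ≠ 0}) :=
    ⟨mn, fun q hq => (hΩ_bounds q hq).1⟩
  have hbddA : BddAbove ((fun x : Fin N → ℝ => (x ⬝ᵥ S.mulVec x) / (x ⬝ᵥ M.mulVec x)) '' {x | x ≠ 0}) :=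
    ⟨mx, fun q hq => (hΩ_bounds q hq).2⟩
  have hΩ_ne : ((fun x : Fin N → ℝ => (x ⬝ᵥ S.mulVec x) / (x ⬝ᵥ M.mulVec x)) '' {x | x ≠ 0}).Nonempty :=
    ⟨_, hmemΩ (Classical.arbitrary (Fin N))⟩
  have hlmin_le : ∀ i, lamMinGen S M ≤ lam i := fun i => csInf_le hbddB (hmemΩ i)
  have hle_lmax : ∀ i, lam i ≤ lamMaxGen S M := fun i => le_csSup hbddA (hmemΩ i)
  have hlmin_pos : 0 < lamMinGen S M :=
    lt_of_lt_of_le hmn_pos (le_csInf hΩ_ne fun q hq => (hΩ_bounds q hq).1)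
  have hlmax_pos : 0 < lamMaxGen S M :=
    lt_of_lt_of_le (hlam_pos (Classical.arbitrary (Fin N))) (hle_lmax _)
  have hlmin_le_lmax : lamMinGen S M ≤ lamMaxGen S M :=
    le_trans (hlmin_le (Classical.arbitrary (Fin N))) (hle_lmax _)
  -- representation of wMinus
  set v := star U *ᵥ (R⁻¹ *ᵥ f) with hvdef
  set C := R⁻¹ * U with hCdef
  have hwrep : ∀ yy : ℝ, wMinus S M f yy
      = C *ᵥ (fun i => (lam i + Real.exp (-yy))⁻¹ * v i) := by
    intro yy
    set c := Real.exp (-yy) with hcdef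
    have hcpos : (0:ℝ) < c := Real.exp_pos _
    have hd : diagonal (fun i => lam i + c)
        = diagonal lam + c • (1 : Matrix (Fin N) (Fin N) ℝ) := by
      rw [smul_one_eq_diagonal, diagonal_add]
    have hfac : S + c • M = (R * U) * diagonal (fun i => lam i + c) * (star U * R) := by
      rw [hd, Matrix.mul_add, Matrix.add_mul]
      congr 1
      · symm
        calc (R * U) * diagonal lam * (star U * R)
            = R * (U * diagonal lam * star U) * R := by simp only [Matrix.mul_assoc]
          _ = S := by rw [← hspec]; exact hSRAR.symm
      · symm
        have h1 : U * (star U * R) = R := by rw [← Matrix.mul_assoc, hUUs, Matrix.one_mul]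
        calc (R * U) * (c • (1 : Matrix (Fin N) (Fin N) ℝ)) * (star U * R)
            = c • (R * (U * (star U * R))) := by
              rw [Matrix.mul_smul, Matrix.mul_one, Matrix.smul_mul, Matrix.mul_assoc]
          _ = c • M := by rw [h1, hRRM]
    have hdinv : (diagonal (fun i => lam i + c))⁻¹ = diagonal (fun i => (lam i + c)⁻¹) := by
      apply inv_eq_right_inv
      rw [diagonal_mul_diagonal]
      rw [show (fun i => (lam i + c) * (lam i + c)⁻¹) = fun _ => (1:ℝ) from
        funext fun i => mul_inv_cancel₀ (ne_of_gt (add_pos (hlam_pos i) hcpos))]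
      exact diagonal_one
    have hinv : (S + c • M)⁻¹ = C * diagonal (fun i => (lam i + c)⁻¹) * (star U * R⁻¹) := by
      rw [hfac]
      simp only [Matrix.mul_inv_rev]
      rw [hsUinv, hUinv, hdinv, hCdef]
      simp only [Matrix.mul_assoc]
    rw [wMinus, ← hcdef, hinv]
    rw [← mulVec_mulVec, ← mulVec_mulVec]
    have hv2 : (star U * R⁻¹) *ᵥ f = v := by rw [← mulVec_mulVec, ← hvdef]
    rw [hv2]
    have harg : (Matrix.diagonal fun i => (lam i + c)⁻¹) *ᵥ v
        = fun i => (lam i + c)⁻¹ * v i := by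
      funext i; exact mulVec_diagonal _ _ i
    rw [harg]
  -- the scalar integrands
  set φ : Fin N → ℝ → ℝ := fun i t => Real.exp (-t) * (lam i + Real.exp (-(t/sm)))⁻¹ with hφdef
  have hφint : ∀ i, IntegrableOn (φ i) (Ioi (0:ℝ)) := by
    intro i
    apply quadAux_integrableOn (K := (lam i)⁻¹)
    · simp only [hφdef]
      apply Continuous.mul (Real.continuous_exp.comp continuous_neg)
      apply Continuous.inv₀
      · exact continuous_const.add (Real.continuous_exp.comp (continuous_id.div_const sm).neg)
      · intro t; exact ne_of_gt (add_pos (hlam_pos i) (Real.exp_pos _))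
    · intro t
      simp only [hφdef]
      have h1 : 0 < lam i + Real.exp (-(t/sm)) := add_pos (hlam_pos i) (Real.exp_pos _)
      rw [abs_of_nonneg (by positivity), mul_comm ((lam i)⁻¹)]
      exact mul_le_mul_of_nonneg_left
        (inv_anti₀ (hlam_pos i) (le_add_of_nonneg_right (Real.exp_pos _).le))
        (Real.exp_nonneg _)
  have hrepr : (fun t => (fun i => φ i t * v i))
      = fun t => ∑ i, (φ i t * v i) • (Pi.single i 1 : Fin N → ℝ) := by
    funext t j
    rw [Finset.sum_apply]
    simp [Pi.single_apply]
  have hψint : Integrable (fun t => (fun i => φ i t * v i)) (volume.restrict (Ioi (0:ℝ))) := by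
    rw [hrepr]
    apply integrable_finset_sum
    intro i _
    exact ((hφint i).mul_const (v i)).smul_const _
  set err : Fin N → ℝ := fun i =>
    (∫ t in Ioi (0:ℝ), φ i t) - ∑ j, τ j * (lam i + Real.exp (-(y j / sm)))⁻¹ with herrdef
  have hE : ((∫ t in Set.Ioi (0:ℝ), Real.exp (-t) • wMinus S M f (t / sm)) -
          ∑ j, τ j • wMinus S M f (y j / sm)) = C *ᵥ (fun i => err i * v i) := by
    have hF : ∀ t : ℝ, Real.exp (-t) • wMinus S M f (t / sm) = C *ᵥ (fun i => φ i t * v i) := by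
      intro t
      have harg : (Real.exp (-t) • fun i => (lam i + Real.exp (-(t/sm)))⁻¹ * v i)
          = (fun i => φ i t * v i) := by
        funext i
        simp only [hφdef, Pi.smul_apply, smul_eq_mul]
        ring
      rw [hwrep (t/sm), ← mulVec_smul, harg]
    have hIeq : (∫ t in Set.Ioi (0:ℝ), Real.exp (-t) • wMinus S M f (t / sm))
        = C *ᵥ (fun i => (∫ t in Ioi (0:ℝ), φ i t) * v i) := by
      simp only [hF]
      set L : (Fin N → ℝ) →L[ℝ] (Fin N → ℝ) :=
        LinearMap.toContinuousLinearMap (Matrix.mulVecLin C) with hLdef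
      have hLa : ∀ x : Fin N → ℝ, C *ᵥ x = L x := fun x => rfl
      simp only [hLa]
      rw [ContinuousLinearMap.integral_comp_comm L hψint]
      congr 1
      have h3 : (∫ t in Ioi (0:ℝ), (fun i => φ i t * v i))
          = ∑ i, ((∫ t in Ioi (0:ℝ), φ i t) * v i) • (Pi.single i 1 : Fin N → ℝ) := by
        rw [hrepr, integral_finset_sum _ (fun i _ => ((hφint i).mul_const (v i)).smul_const _)]
        exact Finset.sum_congr rfl fun i _ => by rw [integral_smul_const, integral_mul_const]
      rw [h3]
      funext j
      rw [Finset.sum_apply]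
      simp [Pi.single_apply]
    have hSeq : (∑ j, τ j • wMinus S M f (y j / sm))
        = C *ᵥ (fun i => (∑ j, τ j * (lam i + Real.exp (-(y j / sm)))⁻¹) * v i) := by
      have h1 : ∀ j, τ j • wMinus S M f (y j / sm)
          = C *ᵥ (τ j • fun i => (lam i + Real.exp (-(y j / sm)))⁻¹ * v i) := by
        intro j; rw [hwrep, mulVec_smul]
      simp only [h1, ← Matrix.mulVecLin_apply, ← map_sum]
      congr 1
      funext i
      rw [Finset.sum_apply, Finset.sum_mul]
      refine Finset.sum_congr rfl fun j _ => ?_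
      simp only [Pi.smul_apply, smul_eq_mul]
      ring
    rw [hIeq, hSeq, ← Matrix.mulVec_sub]
    have harg : ((fun i => (∫ t in Ioi (0:ℝ), φ i t) * v i) -
        fun i => (∑ j, τ j * (lam i + Real.exp (-(y j / sm)))⁻¹) * v i)
        = fun i => err i * v i := by
      funext i
      simp only [Pi.sub_apply, herrdef]
      ring
    rw [harg]
  have hnorm1 : ∀ e : Fin N → ℝ, (C *ᵥ e) ⬝ᵥ M *ᵥ (C *ᵥ e) = ∑ i, (e i)^2 := by
    intro e
    rw [quadAux_dot_mulVec_left]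
    have hCT : Cᵀ = star U * R⁻¹ := by rw [hCdef, transpose_mul, hRiT, hUT]
    rw [hCT, mulVec_mulVec, mulVec_mulVec]
    have hkey : star U * R⁻¹ * M * C = 1 := by
      rw [hCdef, ← hRRM]
      simp only [Matrix.mul_assoc]
      rw [show R * (R⁻¹ * U) = U from by rw [← Matrix.mul_assoc, hRRi, Matrix.one_mul]]
      rw [show R⁻¹ * (R * U) = U from by rw [← Matrix.mul_assoc, hRiR, Matrix.one_mul]]
      exact hUsU
    rw [hkey, one_mulVec]
    simp [dotProduct, pow_two]
  have hnormf : f ⬝ᵥ M⁻¹ *ᵥ f = ∑ i, (v i)^2 := by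
    have hv2 : v = (star U * R⁻¹) *ᵥ f := by rw [hvdef, mulVec_mulVec]
    have hMinv : M⁻¹ = R⁻¹ * R⁻¹ := by rw [← hRRM, Matrix.mul_inv_rev]
    have hBT : (star U * R⁻¹)ᵀ = R⁻¹ * U := by rw [transpose_mul, hRiT, hsUT]
    have hprod : (R⁻¹ * U) * (star U * R⁻¹) = M⁻¹ := by
      rw [hMinv]
      simp only [Matrix.mul_assoc]
      rw [show U * (star U * R⁻¹) = R⁻¹ from by rw [← Matrix.mul_assoc, hUUs, Matrix.one_mul]]
    calc f ⬝ᵥ M⁻¹ *ᵥ f = f ⬝ᵥ ((R⁻¹ * U) * (star U * R⁻¹)) *ᵥ f := by rw [hprod]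
      _ = f ⬝ᵥ ((R⁻¹ * U) *ᵥ ((star U * R⁻¹) *ᵥ f)) := by rw [mulVec_mulVec]
      _ = v ⬝ᵥ v := by rw [← hBT, ← quadAux_dot_mulVec_left, ← hv2]
      _ = ∑ i, (v i)^2 := by simp [dotProduct, pow_two]
  -- scalar quadrature error bounds
  set G := sSup ((fun a => gQuad Q y τ a (1 / sm)) ''
          Set.Icc (1 / lamMaxGen S M) (1 / lamMinGen S M)) with hGdef
  have hbddG : BddAbove ((fun a => gQuad Q y τ a (1 / sm)) ''
          Set.Icc (1 / lamMaxGen S M) (1 / lamMinGen S M)) := by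
    refine ⟨(∫ t in Ioi (0:ℝ), Real.exp (-t)) + ∑ j, τ j, ?_⟩
    rintro q ⟨a, ⟨ha1, _⟩, rfl⟩
    have ha0 : 0 ≤ a := le_trans (le_of_lt (one_div_pos.mpr hlmax_pos)) ha1
    have hda : ∀ t : ℝ, (1:ℝ) ≤ 1 + a * Real.exp (-(1/sm) * t) :=
      fun t => le_add_of_nonneg_right (mul_nonneg ha0 (Real.exp_pos _).le)
    have hint_a : IntegrableOn
        (fun t => Real.exp (-t) / (1 + a * Real.exp (-(1/sm) * t))) (Ioi (0:ℝ)) := by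
      apply quadAux_integrableOn (K := 1)
      · apply Continuous.div (Real.continuous_exp.comp continuous_neg)
        · fun_prop
        · intro t; exact ne_of_gt (lt_of_lt_of_le one_pos (hda t))
      · intro t
        rw [abs_of_nonneg (div_nonneg (Real.exp_pos _).le (le_trans zero_le_one (hda t))),
          one_mul]
        exact div_le_self (Real.exp_pos _).le (hda t)
    have hI0 : 0 ≤ ∫ t in Ioi (0:ℝ), Real.exp (-t) / (1 + a * Real.exp (-(1/sm) * t)) :=
      setIntegral_nonneg measurableSet_Ioi fun t _ =>
        div_nonneg (Real.exp_pos _).le (by linarith [hda t])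
    have hIle : (∫ t in Ioi (0:ℝ), Real.exp (-t) / (1 + a * Real.exp (-(1/sm) * t)))
        ≤ ∫ t in Ioi (0:ℝ), Real.exp (-t) :=
      setIntegral_mono_on hint_a quadAux_expint measurableSet_Ioi fun t _ =>
        div_le_self (Real.exp_pos _).le (hda t)
    have hT0 : 0 ≤ ∑ j, τ j / (1 + a * Real.exp (-(1/sm) * y j)) :=
      Finset.sum_nonneg fun j _ => div_nonneg (hτ j) (by linarith [hda (y j)])
    have hTle : (∑ j, τ j / (1 + a * Real.exp (-(1/sm) * y j))) ≤ ∑ j, τ j :=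
      Finset.sum_le_sum fun j _ => div_le_self (hτ j) (hda (y j))
    show gQuad Q y τ a (1/sm) ≤ _
    unfold gQuad
    rw [abs_sub_le_iff]
    constructor
    · linarith
    · linarith
  have hIccne : (1:ℝ) / lamMaxGen S M ≤ 1 / lamMinGen S M :=
    one_div_le_one_div_of_le hlmin_pos hlmin_le_lmax
  have hmem_gq : ∀ a, a ∈ Set.Icc (1 / lamMaxGen S M) (1 / lamMinGen S M) →
      gQuad Q y τ a (1 / sm) ≤ G := fun a ha => le_csSup hbddG ⟨a, ha, rfl⟩
  have hG0 : 0 ≤ G :=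
    le_trans (abs_nonneg _) (hmem_gq (1 / lamMaxGen S M) ⟨le_refl _, hIccne⟩)
  have herr_bound : ∀ i, |err i| ≤ (1 / lamMinGen S M) * G := by
    intro i
    have hLpos := hlam_pos i
    have hIid : (∫ t in Ioi (0:ℝ), φ i t)
        = (lam i)⁻¹ * ∫ t in Ioi (0:ℝ),
            Real.exp (-t) / (1 + (lam i)⁻¹ * Real.exp (-(1/sm) * t)) := by
      rw [← MeasureTheory.integral_const_mul]
      congr 1
      funext t
      simp only [hφdef]
      rw [show -(1/sm) * t = -(t/sm) from by ring]
      exact quadAux_scalar_id hLpos (Real.exp_pos _)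
    have hSid : (∑ j, τ j * (lam i + Real.exp (-(y j / sm)))⁻¹)
        = (lam i)⁻¹ * ∑ j, τ j / (1 + (lam i)⁻¹ * Real.exp (-(1/sm) * y j)) := by
      rw [Finset.mul_sum]
      refine Finset.sum_congr rfl fun j _ => ?_
      rw [show -(1/sm) * y j = -(y j/sm) from by ring]
      exact quadAux_scalar_id hLpos (Real.exp_pos _)
    have hgq : |err i| = (lam i)⁻¹ * gQuad Q y τ ((lam i)⁻¹) (1/sm) := by
      simp only [herrdef]
      rw [hIid, hSid, ← mul_sub, abs_mul, abs_of_pos (inv_pos.mpr hLpos)]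
      rfl
    rw [hgq]
    have ha_le : (lam i)⁻¹ ≤ 1 / lamMinGen S M := by
      rw [one_div]; exact inv_anti₀ hlmin_pos (hlmin_le i)
    have ha_mem : (lam i)⁻¹ ∈ Set.Icc (1 / lamMaxGen S M) (1 / lamMinGen S M) := by
      constructor
      · rw [one_div]; exact inv_anti₀ (hlam_pos i) (hle_lmax i)
      · exact ha_le
    have hgq0 : 0 ≤ gQuad Q y τ ((lam i)⁻¹) (1/sm) := abs_nonneg _
    exact mul_le_mul ha_le (hmem_gq _ ha_mem) hgq0 (le_of_lt (one_div_pos.mpr hlmin_pos))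
  -- final assembly
  set K := (1 / lamMinGen S M) * G with hKdef
  have hK0 : 0 ≤ K := mul_nonneg (le_of_lt (one_div_pos.mpr hlmin_pos)) hG0
  rw [normWeighted, normWeighted, hE]
  have h1 : (C *ᵥ fun i => err i * v i) ⬝ᵥ M.mulVec (C *ᵥ fun i => err i * v i)
      = ∑ i, (err i * v i)^2 := hnorm1 _
  rw [h1]
  have h2 : f ⬝ᵥ M⁻¹.mulVec f = ∑ i, (v i)^2 := hnormf
  rw [h2]
  calc Real.sqrt (∑ i, (err i * v i)^2)
      ≤ Real.sqrt (∑ i, K^2 * (v i)^2) := by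
        apply Real.sqrt_le_sqrt
        apply Finset.sum_le_sum
        intro i _
        rw [mul_pow]
        have h3 : (err i)^2 ≤ K^2 := by
          rw [← sq_abs (err i)]
          exact pow_le_pow_left₀ (abs_nonneg _) (herr_bound i) 2
        exact mul_le_mul_of_nonneg_right h3 (sq_nonneg _)
    _ = K * Real.sqrt (∑ i, (v i)^2) := by
        rw [← Finset.mul_sum, Real.sqrt_mul (sq_nonneg K), Real.sqrt_sq hK0]
    _ = Real.sqrt (∑ i, (v i)^2) * (1 / lamMinGen S M) * G := by
        rw [hKdef]; ring
end

section
/- Let S and M be symmetric positive definite real N×N matrices, let f ∈ ℝ^N, and for y ≥ 0 set w₊(y) := (e^{-y} S + M)^{-1} f. Let s₊ ∈ (0,1), and let (y_j, τ_j)_{j=1}^{Q} be a quadrature rule with y_j ≥ 0 and τ_j ≥ 0. For a > 0 and b > 0 define g(a,b) := | ∫₀^∞ e^{-y}/(1 + a e^{-b y}) dy − Σ_{j=1}^{Q} τ_j/(1 + a e^{-b y_j}) |. Then ‖ ∫₀^∞ w₊(y/s₊) e^{-y} dy − Σ_{j=1}^{Q} τ_j w₊(y_j/s₊) ‖_M ≤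 ‖f‖_{M^{-1}} · sup { g(a, 1/s₊) : a ∈ [λ_min(S,M), λ_max(S,M)] }, where λ_min(S,M) and λ_max(S,M) are the smallest and largest generalized eigenvalues of (S,M), i.e. the infimum and supremum over nonzero x of (xᵀ S x)/(xᵀ M x). -/
open Matrix MeasureTheory Real Set

-- scalar integrand facts
lemma contDen (a b : ℝ) (ha : 0 < a) :
    Continuous (fun t : ℝ => Real.exp (-t) / (1 + a * Real.exp (-b * t))) := by
  apply Continuous.div
  · exact Real.continuous_exp.comp continuous_neg
  · fun_prop
  · intro t; positivity

lemma denOneLe (a b t : ℝ) (ha : 0 < a) : 1 ≤ 1 + a * Real.exp (-b * t) :=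
  le_add_of_nonneg_right (by positivity)

lemma intExpNeg : IntegrableOn (fun t : ℝ => Real.exp (-t)) (Set.Ioi (0:ℝ)) := by
  simpa using exp_neg_integrableOn_Ioi 0 one_pos

lemma integrableDen (a b : ℝ) (ha : 0 < a) :
    IntegrableOn (fun t : ℝ => Real.exp (-t) / (1 + a * Real.exp (-b * t))) (Set.Ioi 0) := by
  refine intExpNeg.mono' ((contDen a b ha).aestronglyMeasurable) ?_
  filter_upwards with t
  rw [Real.norm_eq_abs, abs_div, abs_of_pos (Real.exp_pos _), abs_of_pos (by positivity)]
  exact div_le_self (Real.exp_pos _).le (denOneLe a b t ha)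

lemma integralDen_mem (a b : ℝ) (ha : 0 < a) :
    (∫ t in Set.Ioi (0:ℝ), Real.exp (-t) / (1 + a * Real.exp (-b * t))) ∈ Set.Icc (0:ℝ) 1 := by
  constructor
  · exact setIntegral_nonneg measurableSet_Ioi fun t _ => by positivity
  · refine le_trans (setIntegral_mono_on (integrableDen a b ha) intExpNeg measurableSet_Ioi
      fun t _ => div_le_self (Real.exp_pos _).le (denOneLe a b t ha))
      (le_of_eq integral_exp_neg_Ioi_zero)


/-- The '+' half of Proposition 4.1: the vector-valued quadrature error for `w₊` is
controlled by the scalar quadrature error function `g` over the spectral interval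
`I₊ = [λ_min(S,M), λ_max(S,M)]`. -/
theorem quad_error_plus {N : ℕ} (S M : Matrix (Fin N) (Fin N) ℝ)
    (hS : S.PosDef) (hM : M.PosDef) (f : Fin N → ℝ)
    (sp : ℝ) (hsp : sp ∈ Set.Ioo (0:ℝ) 1)
    (Q : ℕ) (y τ : Fin Q → ℝ) (hy : ∀ j, 0 ≤ y j) (hτ : ∀ j, 0 ≤ τ j) :
    normWeighted M
        ((∫ t in Set.Ioi (0:ℝ), Real.exp (-t) • wPlus S M f (t / sp)) -
          ∑ j, τ j • wPlus S M f (y j / sp)) ≤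
      normWeighted M⁻¹ f *
        sSup ((fun a => gQuad Q y τ a (1 / sp)) ''
          Set.Icc (lamMinGen S M) (lamMaxGen S M)) := by
  classical
  rcases Nat.eq_zero_or_pos N with hN0 | hN
  · subst hN0
    have h1 : ∀ (v : Fin 0 → ℝ) (W : Matrix (Fin 0) (Fin 0) ℝ), normWeighted W v = 0 := by
      intro v W
      rw [normWeighted]
      simp [dotProduct]
    rw [h1, h1, zero_mul]
  -- square root of M
  open scoped MatrixOrder in
  set P : Matrix (Fin N) (Fin N) ℝ := CFC.sqrt M with hPdef
  have hPP : P * P = M := by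
    open scoped MatrixOrder in exact CFC.sqrt_mul_sqrt_self M hM.posSemidef.nonneg
  have hPsymm : Pᵀ = P := by
    have h := (open scoped MatrixOrder in (CFC.sqrt_nonneg M).posSemidef.1 : P.IsHermitian)
    rwa [Matrix.IsHermitian, Matrix.conjTranspose_eq_transpose_of_trivial] at h
  have hPdet : IsUnit P.det := by
    have h2 : P.det * P.det = M.det := by rw [← Matrix.det_mul, hPP]
    refine isUnit_iff_ne_zero.mpr fun h => ?_
    rw [h, mul_zero] at h2
    exact hM.det_pos.ne' h2.symm
  have hPinv : P * P⁻¹ = 1 := Matrix.mul_nonsing_inv _ hPdet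
  have hPinv' : P⁻¹ * P = 1 := Matrix.nonsing_inv_mul _ hPdet
  have hPiU : IsUnit P⁻¹ := ⟨⟨P⁻¹, P, hPinv', hPinv⟩, rfl⟩
  have hPinvsymm : P⁻¹ᵀ = P⁻¹ := by
    rw [Matrix.transpose_nonsing_inv, hPsymm]
  have dotT : ∀ (B : Matrix (Fin N) (Fin N) ℝ) (x z : Fin N → ℝ),
      x ⬝ᵥ B *ᵥ z = (Bᵀ *ᵥ x) ⬝ᵥ z := by
    intro B x z
    rw [dotProduct_mulVec, Matrix.mulVec_transpose]
  -- dot product swap for symmetric matrices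
  have dotswap : ∀ (B : Matrix (Fin N) (Fin N) ℝ), Bᵀ = B → ∀ x z : Fin N → ℝ,
      x ⬝ᵥ B *ᵥ z = (B *ᵥ x) ⬝ᵥ z := by
    intro B hB x z
    rw [dotT, hB]
  -- the matrix A
  set A : Matrix (Fin N) (Fin N) ℝ := P⁻¹ * S * P⁻¹ with hAdef
  have hSsymm : Sᵀ = S := by
    have h := hS.1
    rwa [Matrix.IsHermitian, Matrix.conjTranspose_eq_transpose_of_trivial] at h
  have hAH : A.IsHermitian := by
    rw [Matrix.IsHermitian, Matrix.conjTranspose_eq_transpose_of_trivial, hAdef,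
      Matrix.transpose_mul, Matrix.transpose_mul, hSsymm, hPinvsymm, Matrix.mul_assoc]
  have hApos : A.PosDef := by
    refine Matrix.PosDef.of_dotProduct_mulVec_pos hAH fun x hx => ?_
    have hx' : P⁻¹ *ᵥ x ≠ 0 := by
      intro h
      have hinj := Matrix.mulVec_injective_iff_isUnit.mpr hPiU
      exact hx (by simpa [Matrix.mulVec_zero] using hinj.eq_iff.mp (h.trans (Matrix.mulVec_zero _).symm))
    have h2 := hS.dotProduct_mulVec_pos hx'
    rw [star_trivial] at h2 ⊢
    calc x ⬝ᵥ A *ᵥ x = x ⬝ᵥ P⁻¹ *ᵥ (S *ᵥ (P⁻¹ *ᵥ x)) := by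
          rw [hAdef, Matrix.mulVec_mulVec, Matrix.mulVec_mulVec]
      _ = (P⁻¹ *ᵥ x) ⬝ᵥ S *ᵥ (P⁻¹ *ᵥ x) := dotswap _ hPinvsymm _ _
      _ > 0 := h2
  -- spectral decomposition of A
  set Umat : Matrix (Fin N) (Fin N) ℝ := (hAH.eigenvectorUnitary : Matrix (Fin N) (Fin N) ℝ) with hUdef
  set L : Fin N → ℝ := hAH.eigenvalues with hLdef
  have hU : Umat * Umatᵀ = 1 := by
    have h := (Matrix.mem_unitaryGroup_iff).mp hAH.eigenvectorUnitary.2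
    rwa [Matrix.star_eq_conjTranspose, Matrix.conjTranspose_eq_transpose_of_trivial] at h
  have hU' : Umatᵀ * Umat = 1 := by
    have h := (Matrix.mem_unitaryGroup_iff').mp hAH.eigenvectorUnitary.2
    rwa [Matrix.star_eq_conjTranspose, Matrix.conjTranspose_eq_transpose_of_trivial] at h
  have hspec : A = Umat * Matrix.diagonal L * Umatᵀ := by
    have h := hAH.spectral_theorem
    rwa [Unitary.conjStarAlgAut_apply, RCLike.ofReal_real_eq_id, Function.id_comp, Matrix.star_eq_conjTranspose,
      Matrix.conjTranspose_eq_transpose_of_trivial] at h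
  have hLpos : ∀ i, 0 < L i := fun i => hApos.eigenvalues_pos i
  -- quadratic form of A in eigen-coordinates
  have quadA : ∀ u : Fin N → ℝ,
      u ⬝ᵥ A *ᵥ u = ∑ i, L i * ((Umatᵀ *ᵥ u) i)^2 := by
    intro u
    rw [hspec, ← Matrix.mulVec_mulVec, ← Matrix.mulVec_mulVec, dotT Umat]
    simp only [dotProduct, Matrix.mulVec_diagonal]
    exact Finset.sum_congr rfl fun i _ => by ring
  -- orthogonality
  have dotw : ∀ u : Fin N → ℝ, (Umatᵀ *ᵥ u) ⬝ᵥ (Umatᵀ *ᵥ u) = u ⬝ᵥ u := by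
    intro u
    rw [dotT, Matrix.transpose_transpose, Matrix.mulVec_mulVec, hU, Matrix.one_mulVec]
  have dotu : ∀ v : Fin N → ℝ, (Umat *ᵥ v) ⬝ᵥ (Umat *ᵥ v) = v ⬝ᵥ v := by
    intro v
    rw [dotT, Matrix.mulVec_mulVec, hU', Matrix.one_mulVec]
  -- S and M quadratic forms through P
  have hSdec : S = P * A * P := by
    rw [hAdef, Matrix.mul_assoc, Matrix.mul_assoc, hPinv', Matrix.mul_one, ← Matrix.mul_assoc,
      hPinv, Matrix.one_mul]
  have hSq : ∀ x : Fin N → ℝ, x ⬝ᵥ S *ᵥ x = (P *ᵥ x) ⬝ᵥ A *ᵥ (P *ᵥ x) := by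
    intro x
    conv_lhs => rw [hSdec]
    rw [Matrix.mul_assoc, ← Matrix.mulVec_mulVec, dotswap P hPsymm, Matrix.mulVec_mulVec,
      ← Matrix.mulVec_mulVec]
  have hMq : ∀ x : Fin N → ℝ, x ⬝ᵥ M *ᵥ x = (P *ᵥ x) ⬝ᵥ (P *ᵥ x) := by
    intro x
    conv_lhs => rw [← hPP]
    rw [← Matrix.mulVec_mulVec, dotswap P hPsymm]
  have hMqpos : ∀ x : Fin N → ℝ, x ≠ 0 → 0 < x ⬝ᵥ M *ᵥ x := by
    intro x hx
    have h := hM.dotProduct_mulVec_pos hx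
    rwa [star_trivial] at h
  haveI : Nonempty (Fin N) := ⟨⟨0, hN⟩⟩
  set RS : Set ℝ :=
    ((fun x : Fin N → ℝ => (x ⬝ᵥ S.mulVec x) / (x ⬝ᵥ M.mulVec x)) '' {x | x ≠ 0}) with hRSdef
  set lmin : ℝ := Finset.univ.inf' Finset.univ_nonempty L with hlmindef
  set lmax : ℝ := Finset.univ.sup' Finset.univ_nonempty L with hlmaxdef
  -- every Rayleigh quotient lies between lmin and lmax
  have Rbound : ∀ r ∈ RS, lmin ≤ r ∧ r ≤ lmax := by
    rintro r ⟨x, hx, rfl⟩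
    have hx0 : x ≠ 0 := hx
    have hD : 0 < x ⬝ᵥ M *ᵥ x := hMqpos x hx0
    have hMw : x ⬝ᵥ M *ᵥ x = ∑ i, ((Umatᵀ *ᵥ (P *ᵥ x)) i)^2 := by
      rw [hMq, ← dotw]
      simp [dotProduct, pow_two]
    have hSw : x ⬝ᵥ S *ᵥ x = ∑ i, L i * ((Umatᵀ *ᵥ (P *ᵥ x)) i)^2 := by
      rw [hSq, quadA]
    constructor
    · rw [le_div_iff₀ hD]
      calc lmin * (x ⬝ᵥ M *ᵥ x) = ∑ i, lmin * ((Umatᵀ *ᵥ (P *ᵥ x)) i)^2 := by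
            rw [hMw, Finset.mul_sum]
        _ ≤ ∑ i, L i * ((Umatᵀ *ᵥ (P *ᵥ x)) i)^2 :=
            Finset.sum_le_sum fun i _ =>
              mul_le_mul_of_nonneg_right (Finset.inf'_le _ (Finset.mem_univ i)) (sq_nonneg _)
        _ = x ⬝ᵥ S *ᵥ x := hSw.symm
    · rw [div_le_iff₀ hD]
      calc x ⬝ᵥ S *ᵥ x = ∑ i, L i * ((Umatᵀ *ᵥ (P *ᵥ x)) i)^2 := hSw
        _ ≤ ∑ i, lmax * ((Umatᵀ *ᵥ (P *ᵥ x)) i)^2 :=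
            Finset.sum_le_sum fun i _ =>
              mul_le_mul_of_nonneg_right (Finset.le_sup' _ (Finset.mem_univ i)) (sq_nonneg _)
        _ = lmax * (x ⬝ᵥ M *ᵥ x) := by rw [hMw, Finset.mul_sum]
  -- each eigenvalue is a Rayleigh quotient
  have hmem : ∀ k, L k ∈ RS := by
    intro k
    set xk : Fin N → ℝ := P⁻¹ *ᵥ (Umat *ᵥ Pi.single k 1) with hxkdef
    have hPx : P *ᵥ xk = Umat *ᵥ Pi.single k 1 := by
      rw [hxkdef, Matrix.mulVec_mulVec, hPinv, Matrix.one_mulVec]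
    have hMxk : xk ⬝ᵥ M *ᵥ xk = 1 := by
      rw [hMq, hPx, dotu]
      simp [dotProduct, Pi.single_apply]
    have hSxk : xk ⬝ᵥ S *ᵥ xk = L k := by
      rw [hSq, quadA, hPx, Matrix.mulVec_mulVec, hU', Matrix.one_mulVec]
      have h1 : ∀ i, L i * ((Pi.single k 1 : Fin N → ℝ) i)^2
          = if i = k then L k else 0 := by
        intro i; by_cases h : i = k <;> simp [h, Pi.single_apply]
      rw [Finset.sum_congr rfl fun i _ => h1 i]
      simp
    have hxk0 : xk ≠ 0 := by
      intro h
      have : (1:ℝ) = 0 := by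
        rw [← hMxk, h]
        simp
      simp at this
    exact ⟨xk, hxk0, by
      show xk ⬝ᵥ S *ᵥ xk / (xk ⬝ᵥ M *ᵥ xk) = L k
      rw [hSxk, hMxk, div_one]⟩
  have hbddA : BddAbove RS := ⟨lmax, fun r hr => (Rbound r hr).2⟩
  have hbddB : BddBelow RS := ⟨lmin, fun r hr => (Rbound r hr).1⟩
  have hlamlo : ∀ k, sInf RS ≤ L k := fun k => csInf_le hbddB (hmem k)
  have hlamhi : ∀ k, L k ≤ sSup RS := fun k => le_csSup hbddA (hmem k)
  have hlminpos : 0 < lmin := by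
    rw [hlmindef]
    exact (Finset.lt_inf'_iff _).mpr fun i _ => hLpos i
  have hInfpos : 0 < sInf RS :=
    lt_of_lt_of_le hlminpos (le_csInf ⟨L ⟨0, hN⟩, hmem _⟩ fun r hr => (Rbound r hr).1)
  -- cancellation helpers
  have cPPi : ∀ X : Matrix (Fin N) (Fin N) ℝ, P * (P⁻¹ * X) = X := fun X => by
    rw [← Matrix.mul_assoc, hPinv, Matrix.one_mul]
  have cUtU : ∀ X : Matrix (Fin N) (Fin N) ℝ, Umatᵀ * (Umat * X) = X := fun X => by
    rw [← Matrix.mul_assoc, hU', Matrix.one_mul]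
  have cUUt : ∀ X : Matrix (Fin N) (Fin N) ℝ, Umat * (Umatᵀ * X) = X := fun X => by
    rw [← Matrix.mul_assoc, hU, Matrix.one_mul]
  -- the key inverse formula
  have key : ∀ r : ℝ, 0 < r → (r • S + M)⁻¹ =
      P⁻¹ * (Umat * Matrix.diagonal (fun i => (1 + L i * r)⁻¹) * Umatᵀ) * P⁻¹ := by
    intro r hr
    have hden : ∀ i, (0:ℝ) < 1 + L i * r := fun i =>
      add_pos_of_pos_of_nonneg one_pos (mul_nonneg (hLpos i).le hr.le)
    have hD : Matrix.diagonal (fun i => 1 + L i * r) = 1 + r • Matrix.diagonal L := by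
      ext i j
      by_cases h : i = j
      · subst h
        simp [Matrix.one_apply_eq]
        ring
      · simp [Matrix.diagonal_apply_ne _ h, Matrix.one_apply_ne h]
    have hfact : r • S + M = P * (Umat * Matrix.diagonal (fun i => 1 + L i * r) * Umatᵀ) * P := by
      have h1 : Umat * Matrix.diagonal (fun i => 1 + L i * r) * Umatᵀ = 1 + r • A := by
        rw [hD, Matrix.mul_add, Matrix.mul_one, Matrix.add_mul, hU, Matrix.mul_smul,
          Matrix.smul_mul, ← hspec]
      rw [h1, Matrix.mul_add, Matrix.mul_one, Matrix.add_mul, hPP, Matrix.mul_smul,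
        Matrix.smul_mul, ← hSdec, add_comm]
    apply Matrix.inv_eq_right_inv
    rw [hfact]
    have cDD : ∀ X : Matrix (Fin N) (Fin N) ℝ,
        Matrix.diagonal (fun i => 1 + L i * r) * (Matrix.diagonal (fun i => (1 + L i * r)⁻¹) * X)
          = X := by
      intro X
      rw [← Matrix.mul_assoc, Matrix.diagonal_mul_diagonal,
        show (fun i => (1 + L i * r) * (1 + L i * r)⁻¹) = fun _ => (1:ℝ) from
          funext fun i => mul_inv_cancel₀ (hden i).ne', Matrix.diagonal_one, Matrix.one_mul]
    simp only [Matrix.mul_assoc]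
    rw [cPPi, cUtU, cDD, cUUt, hPinv]
  -- coordinates of f
  set c : Fin N → ℝ := Umatᵀ *ᵥ (P⁻¹ *ᵥ f) with hcdef
  set b : ℝ := 1 / sp with hbdef
  have hb : 0 < b := by
    rw [hbdef]
    exact one_div_pos.mpr hsp.1
  have hexp_arg : ∀ t : ℝ, Real.exp (-(t / sp)) = Real.exp (-(b * t)) := by
    intro t
    rw [hbdef]
    ring_nf
  -- representation of wPlus
  have wkey : ∀ s : ℝ, wPlus S M f s
      = (P⁻¹ * Umat) *ᵥ (fun i => (1 + L i * Real.exp (-s))⁻¹ * c i) := by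
    intro s
    rw [wPlus, key (Real.exp (-s)) (Real.exp_pos _)]
    show (P⁻¹ * (Umat * Matrix.diagonal (fun i => (1 + L i * Real.exp (-s))⁻¹) * Umatᵀ) * P⁻¹) *ᵥ f
      = _
    simp only [Matrix.mul_assoc, ← Matrix.mulVec_mulVec]
    have hv : (Matrix.diagonal fun i => (1 + L i * Real.exp (-s))⁻¹) *ᵥ (Umatᵀ *ᵥ P⁻¹ *ᵥ f)
        = fun i => (1 + L i * Real.exp (-s))⁻¹ * c i := by
      funext i
      rw [Matrix.mulVec_diagonal]
    rw [hv]
  -- the vector-valued integrand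
  set F : ℝ → Fin N → ℝ :=
    fun t i => Real.exp (-t) / (1 + L i * Real.exp (-b * t)) * c i with hFdef
  have hdenpos : ∀ i (t : ℝ), 0 < 1 + L i * Real.exp (-b * t) := fun i t =>
    add_pos_of_pos_of_nonneg one_pos (mul_nonneg (hLpos i).le (Real.exp_pos _).le)
  have claimInt : ∀ t : ℝ, Real.exp (-t) • wPlus S M f (t / sp) = (P⁻¹ * Umat) *ᵥ F t := by
    intro t
    rw [wkey, ← Matrix.mulVec_smul]
    refine congrArg (fun v => (P⁻¹ * Umat) *ᵥ v) ?_
    funext i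
    have harg : -(t / sp) = -(b * t) := by rw [hbdef]; ring
    simp only [hFdef, Pi.smul_apply, smul_eq_mul, harg]
    rw [div_eq_mul_inv]
    ring
  have claimSum : ∀ j, τ j • wPlus S M f (y j / sp)
      = (P⁻¹ * Umat) *ᵥ (fun i => τ j / (1 + L i * Real.exp (-b * y j)) * c i) := by
    intro j
    rw [wkey, ← Matrix.mulVec_smul]
    refine congrArg (fun v => (P⁻¹ * Umat) *ᵥ v) ?_
    funext i
    have harg : -(y j / sp) = -(b * y j) := by rw [hbdef]; ring
    simp only [Pi.smul_apply, smul_eq_mul, harg]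
    rw [div_eq_mul_inv]
    ring
  have hFcont : Continuous F := by
    apply continuous_pi
    intro i
    simp only [hFdef]
    exact (contDen (L i) b (hLpos i)).mul continuous_const
  have hFint : IntegrableOn F (Set.Ioi (0:ℝ)) := by
    refine Integrable.mono' (intExpNeg.const_mul (∑ i, |c i|)) hFcont.aestronglyMeasurable ?_
    filter_upwards with t
    rw [pi_norm_le_iff_of_nonneg (by positivity)]
    intro i
    simp only [hFdef]
    rw [Real.norm_eq_abs, abs_mul, abs_div, abs_of_pos (Real.exp_pos _),
      abs_of_pos (hdenpos i t)]
    calc Real.exp (-t) / (1 + L i * Real.exp (-b * t)) * |c i|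
        ≤ Real.exp (-t) * |c i| :=
          mul_le_mul_of_nonneg_right
            (div_le_self (Real.exp_pos _).le (denOneLe (L i) b t (hLpos i))) (abs_nonneg _)
      _ ≤ Real.exp (-t) * ∑ i, |c i| :=
          mul_le_mul_of_nonneg_left
            (Finset.single_le_sum (f := fun i => |c i|) (fun _ _ => abs_nonneg _)
              (Finset.mem_univ i)) (Real.exp_pos _).le
      _ = (∑ i, |c i|) * Real.exp (-t) := mul_comm _ _
  set Bm : Matrix (Fin N) (Fin N) ℝ := P⁻¹ * Umat with hBmdef
  set LB : (Fin N → ℝ) →L[ℝ] (Fin N → ℝ) := LinearMap.toContinuousLinearMap Bm.mulVecLin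
    with hLBdef
  have hLB : ∀ v, LB v = Bm *ᵥ v := fun v => rfl
  have hint2 : (∫ t in Set.Ioi (0:ℝ), Real.exp (-t) • wPlus S M f (t / sp))
      = Bm *ᵥ (∫ t in Set.Ioi (0:ℝ), F t) := by
    rw [show (fun t => Real.exp (-t) • wPlus S M f (t / sp)) = fun t => LB (F t) from
      funext fun t => by rw [claimInt t, hLB]]
    rw [ContinuousLinearMap.integral_comp_comm LB hFint, hLB]
  have hsum2 : (∑ j, τ j • wPlus S M f (y j / sp))
      = Bm *ᵥ (∑ j, fun i => τ j / (1 + L i * Real.exp (-b * y j)) * c i) := by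
    rw [show (∑ j, τ j • wPlus S M f (y j / sp))
        = ∑ j, LB (fun i => τ j / (1 + L i * Real.exp (-b * y j)) * c i) from
      Finset.sum_congr rfl fun j _ => by rw [claimSum j, hLB]]
    rw [← map_sum LB _ Finset.univ, hLB]
  set e : Fin N → ℝ := fun i =>
    (∫ t in Set.Ioi (0:ℝ), Real.exp (-t) / (1 + L i * Real.exp (-b * t))) -
      ∑ j, τ j / (1 + L i * Real.exp (-b * y j)) with hedef
  have hcomp : ((∫ t in Set.Ioi (0:ℝ), F t)
        - ∑ j, fun i => τ j / (1 + L i * Real.exp (-b * y j)) * c i)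
      = fun i => e i * c i := by
    funext i
    have h := ContinuousLinearMap.integral_comp_comm
      (ContinuousLinearMap.proj (R := ℝ) (φ := fun _ : Fin N => ℝ) i) hFint
    simp only [ContinuousLinearMap.proj_apply] at h
    have h1 : (∫ t in Set.Ioi (0:ℝ), F t) i
        = (∫ t in Set.Ioi (0:ℝ), Real.exp (-t) / (1 + L i * Real.exp (-b * t))) * c i := by
      rw [← h]
      simp only [hFdef]
      rw [MeasureTheory.integral_mul_const]
    have h2 : (∑ j, fun i => τ j / (1 + L i * Real.exp (-b * y j)) * c i) i
        = (∑ j, τ j / (1 + L i * Real.exp (-b * y j))) * c i := by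
      rw [Finset.sum_apply, Finset.sum_mul]
    rw [Pi.sub_apply, h1, h2, hedef, sub_mul]
  -- the error vector
  have herr : ((∫ t in Set.Ioi (0:ℝ), Real.exp (-t) • wPlus S M f (t / sp))
        - ∑ j, τ j • wPlus S M f (y j / sp))
      = Bm *ᵥ (fun i => e i * c i) := by
    rw [hint2, hsum2, ← Matrix.mulVec_sub, hcomp]
  -- norm identities
  have hnormB : ∀ v : Fin N → ℝ, normWeighted M (Bm *ᵥ v) = Real.sqrt (v ⬝ᵥ v) := by
    intro v
    rw [normWeighted]
    congr 1
    have hPB : P *ᵥ (Bm *ᵥ v) = Umat *ᵥ v := by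
      rw [hBmdef, Matrix.mulVec_mulVec, ← Matrix.mul_assoc, hPinv, Matrix.one_mul]
    calc (Bm *ᵥ v) ⬝ᵥ M *ᵥ (Bm *ᵥ v) = (P *ᵥ (Bm *ᵥ v)) ⬝ᵥ (P *ᵥ (Bm *ᵥ v)) := hMq _
      _ = (Umat *ᵥ v) ⬝ᵥ (Umat *ᵥ v) := by rw [hPB]
      _ = v ⬝ᵥ v := dotu v
  have hnormf : normWeighted M⁻¹ f = Real.sqrt (c ⬝ᵥ c) := by
    rw [normWeighted]
    congr 1
    have hMinv : M⁻¹ = P⁻¹ * P⁻¹ := by rw [← hPP, Matrix.mul_inv_rev]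
    calc f ⬝ᵥ M⁻¹ *ᵥ f = f ⬝ᵥ P⁻¹ *ᵥ (P⁻¹ *ᵥ f) := by rw [hMinv, ← Matrix.mulVec_mulVec]
      _ = (P⁻¹ *ᵥ f) ⬝ᵥ (P⁻¹ *ᵥ f) := dotswap _ hPinvsymm _ _
      _ = c ⬝ᵥ c := (dotw _).symm
  -- the sup bound
  set G : ℝ := sSup ((fun a => gQuad Q y τ a b) '' Set.Icc (lamMinGen S M) (lamMaxGen S M))
    with hGdef
  have hIcc : ∀ k, L k ∈ Set.Icc (lamMinGen S M) (lamMaxGen S M) := fun k =>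
    ⟨hlamlo k, hlamhi k⟩
  have hapos : ∀ a ∈ Set.Icc (lamMinGen S M) (lamMaxGen S M), 0 < a := fun a ha =>
    lt_of_lt_of_le hInfpos ha.1
  have hgbdd : BddAbove ((fun a => gQuad Q y τ a b) ''
      Set.Icc (lamMinGen S M) (lamMaxGen S M)) := by
    refine ⟨1 + ∑ j, τ j, ?_⟩
    rintro g ⟨a, ha, rfl⟩
    have ha0 : 0 < a := hapos a ha
    have hI := integralDen_mem a b ha0
    have hT0 : 0 ≤ ∑ j, τ j / (1 + a * Real.exp (-b * y j)) :=
      Finset.sum_nonneg fun j _ => div_nonneg (hτ j) (by positivity)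
    have hT1 : (∑ j, τ j / (1 + a * Real.exp (-b * y j))) ≤ ∑ j, τ j :=
      Finset.sum_le_sum fun j _ => div_le_self (hτ j) (denOneLe a b (y j) ha0)
    show gQuad Q y τ a b ≤ 1 + ∑ j, τ j
    rw [gQuad]
    exact abs_le.mpr ⟨by linarith [hI.1, hI.2], by linarith [hI.1, hI.2]⟩
  have hGnn : 0 ≤ G :=
    le_trans (abs_nonneg _) (le_csSup hgbdd ⟨L ⟨0, hN⟩, hIcc _, rfl⟩)
  have heG : ∀ i, |e i| ≤ G := by
    intro i
    have hgq : gQuad Q y τ (L i) b = |e i| := rfl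
    rw [← hgq]
    exact le_csSup hgbdd ⟨L i, hIcc i, rfl⟩
  -- final estimate
  rw [herr, hnormB, hnormf]
  have hsum_le : (fun i => e i * c i) ⬝ᵥ (fun i => e i * c i) ≤ G^2 * (c ⬝ᵥ c) := by
    rw [dotProduct, dotProduct, Finset.mul_sum]
    refine Finset.sum_le_sum fun i _ => ?_
    have h1 : e i * c i * (e i * c i) = e i^2 * (c i * c i) := by ring
    have h2 : e i^2 ≤ G^2 := by
      rw [← sq_abs (e i)]
      exact pow_le_pow_left₀ (abs_nonneg _) (heG i) 2
    rw [h1]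
    exact mul_le_mul_of_nonneg_right h2 (mul_self_nonneg _)
  calc Real.sqrt ((fun i => e i * c i) ⬝ᵥ fun i => e i * c i)
      ≤ Real.sqrt (G^2 * (c ⬝ᵥ c)) := Real.sqrt_le_sqrt hsum_le
    _ = G * Real.sqrt (c ⬝ᵥ c) := by
        rw [Real.sqrt_mul (sq_nonneg G), Real.sqrt_sq hGnn]
    _ = Real.sqrt (c ⬝ᵥ c) * G := mul_comm _ _
end
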